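/- arXiv:1004.1850 — 3 statements merged into one kernel-verified Lean document; each statement's English description precedes it below -/
import Mathlib

section
/- Let X₁, X₂, … be i.i.d. random variables taking the values +1 and −1 each with probability 1/2, let S₀ = 0 and S_n = X₁ + ⋯ + X_n be the simplest symmetric random walk, and let τ = inf{i > 0 : S_i = 0}. For a positive integer α let L_α be the number of indices t ∈ {0, 1, …, τ − 1} with S_t = α − 1 and S_{t+1} = α. Then E L_α = 1/2 for every positive integer α. -/
open MeasureTheory ProbabilityTheory Filter
open scoped Topology ENNReal NNReal

set_option linter.unusedSectionVars false

noncomputable section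

variable {Ω : Type*} [MeasurableSpace Ω]

/-- Partial sums of the steps: `pS X n = X 0 + ⋯ + X (n-1)`, i.e. the walk `S_n`, where
`X i` stands for the step `X_{i+1}` of the paper. -/
def pS (X : ℕ → Ω → ℝ) : ℕ → Ω → ℝ
  | 0 => fun _ => 0
  | (t + 1) => fun ω => pS X t ω + X t ω

/-- The first return time to `0`: `τ = inf {i > 0 : S_i = 0}`. -/
def tauRet (X : ℕ → Ω → ℝ) (ω : Ω) : ℕ∞ :=
  sInf {n : ℕ∞ | ∃ i : ℕ, n = (i : ℕ∞) ∧ 0 < i ∧ pS X i ω = 0}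

/-- The number of upcrossings of the level `α` before `τ`: the number of
`t ∈ {0, 1, …, τ - 1}` with `S_t = α - 1` and `S_{t+1} = α`. -/
def nUp (X : ℕ → Ω → ℝ) (α : ℝ) (ω : Ω) : ℕ :=
  Set.ncard {t : ℕ | (t : ℕ∞) < tauRet X ω ∧ pS X t ω = α - 1 ∧ pS X (t + 1) ω = α}

section Aux

variable {X : ℕ → Ω → ℝ}

lemma pS_succ (X : ℕ → Ω → ℝ) (n : ℕ) (ω : Ω) :
    pS X (n + 1) ω = pS X n ω + X n ω := rfl

lemma pS_zero (X : ℕ → Ω → ℝ) (ω : Ω) : pS X 0 ω = 0 := rfl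

lemma pS_eq_sum (X : ℕ → Ω → ℝ) (n : ℕ) (ω : Ω) :
    pS X n ω = ∑ i ∈ Finset.range n, X i ω := by
  induction n with
  | zero => simp [pS_zero]
  | succ n ih => rw [pS_succ, ih, Finset.sum_range_succ]

lemma measurable_pS (hmeas : ∀ i, Measurable (X i)) (n : ℕ) :
    Measurable (pS X n) := by
  induction n with
  | zero => exact measurable_const
  | succ n ih => exact ih.add (hmeas n)

/-- `tauRet` is `> t` iff there is no return to zero at a positive time `≤ t`. -/
lemma lt_tauRet_iff (ω : Ω) (t : ℕ) :
    (t : ℕ∞) < tauRet X ω ↔ ∀ i ≤ t, ¬(0 < i ∧ pS X i ω = 0) := by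
  constructor
  · intro h i hit hbad
    have hmem : (i : ℕ∞) ∈ {n : ℕ∞ | ∃ i : ℕ, n = (i : ℕ∞) ∧ 0 < i ∧ pS X i ω = 0} :=
      ⟨i, rfl, hbad⟩
    have := lt_of_lt_of_le h (sInf_le hmem)
    exact absurd (Nat.cast_lt.mp this) (not_lt.mpr hit)
  · intro h
    have : (t : ℕ∞) + 1 ≤ tauRet X ω := by
      apply le_sInf
      rintro n ⟨i, rfl, hi0, hiS⟩
      have hti : t < i := by
        by_contra hle
        exact h i (not_lt.mp hle) ⟨hi0, hiS⟩
      calc (t : ℕ∞) + 1 = ((t + 1 : ℕ) : ℕ∞) := by push_cast; ring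
        _ ≤ (i : ℕ∞) := by exact_mod_cast hti
    calc (t : ℕ∞) < (t : ℕ∞) + 1 := by
          exact (ENat.lt_add_one_iff (by simp)).mpr le_rfl
      _ ≤ tauRet X ω := this

lemma zero_lt_tauRet (ω : Ω) : (0 : ℕ∞) < tauRet X ω := by
  rw [show ((0:ℕ∞)) = ((0:ℕ) : ℕ∞) by simp, lt_tauRet_iff]
  intro i hi
  simp at hi
  simp [hi]

end Aux


/-- Pure combinatorial telescoping lemma: for an integer path with `±1` steps starting and
ending at `0`, the number of upcrossings of the edge `(k-1, k)` (for `k ≥ 1`) equals the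
number of downcrossings. -/
lemma count_up_eq_count_down (f : ℕ → ℤ) (hf0 : f 0 = 0)
    (hstep : ∀ t, f (t + 1) = f t + 1 ∨ f (t + 1) = f t - 1)
    (k : ℤ) (hk : 1 ≤ k) (N : ℕ) (hN : f N = 0) :
    ((Finset.range N).filter (fun t => f t = k - 1 ∧ f (t + 1) = k)).card =
    ((Finset.range N).filter (fun t => f t = k ∧ f (t + 1) = k - 1)).card := by
  have key : ∀ m : ℕ,
      ((Finset.range m).filter (fun t => f t = k - 1 ∧ f (t + 1) = k)).card =
      ((Finset.range m).filter (fun t => f t = k ∧ f (t + 1) = k - 1)).card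
        + (if k ≤ f m then 1 else 0) := by
    intro m
    induction m with
    | zero =>
      rw [if_neg (by omega)]
      simp
    | succ m ih =>
      rw [Finset.range_add_one, Finset.filter_insert, Finset.filter_insert]
      by_cases hup : f m = k - 1 ∧ f (m + 1) = k
      · have hnotdown : ¬(f m = k ∧ f (m + 1) = k - 1) := by omega
        rw [if_pos hup, if_neg hnotdown, Finset.card_insert_of_notMem (by simp)]
        have h1 : ¬ (k ≤ f m) := by omega
        have h2 : k ≤ f (m + 1) := by omega
        rw [if_neg h1] at ih
        rw [if_pos h2]
        omega
      · by_cases hdown : f m = k ∧ f (m + 1) = k - 1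
        · rw [if_neg hup, if_pos hdown, Finset.card_insert_of_notMem (by simp)]
          have h1 : k ≤ f m := by omega
          have h2 : ¬ (k ≤ f (m + 1)) := by omega
          rw [if_pos h1] at ih
          rw [if_neg h2]
          omega
        · rw [if_neg hup, if_neg hdown]
          have hsame : (k ≤ f m) ↔ (k ≤ f (m + 1)) := by
            rcases hstep m with h | h <;> omega
          by_cases h1 : k ≤ f m
          · rw [if_pos h1] at ih; rw [if_pos (hsame.mp h1)]; omega
          · rw [if_neg h1] at ih; rw [if_neg (fun hc => h1 (hsame.mpr hc))]; omega
  have hkey := key N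
  rw [hN, if_neg (by omega)] at hkey
  omega

section Aux2

variable {X : ℕ → Ω → ℝ}

/-- On the good set, the walk is integer-valued. -/
lemma pS_int (ω : Ω) (hgood : ∀ i, X i ω = 1 ∨ X i ω = -1) (n : ℕ) :
    ∃ z : ℤ, pS X n ω = z := by
  induction n with
  | zero => exact ⟨0, by simp [pS_zero]⟩
  | succ n ih =>
    obtain ⟨z, hz⟩ := ih
    rcases hgood n with h | h
    · exact ⟨z + 1, by rw [pS_succ, hz, h]; push_cast; ring⟩
    · exact ⟨z - 1, by rw [pS_succ, hz, h]; push_cast; ring⟩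

/-- If the walk returns to zero, `tauRet` equals the first return time. -/
lemma tauRet_eq_find (ω : Ω) (h : ∃ n, 0 < n ∧ pS X n ω = 0) :
    tauRet X ω = ((Nat.find h : ℕ) : ℕ∞) := by
  apply le_antisymm
  · exact sInf_le ⟨Nat.find h, rfl, Nat.find_spec h⟩
  · apply le_sInf
    rintro n ⟨i, rfl, hi⟩
    exact_mod_cast Nat.find_le hi

lemma lt_tauRet_iff_lt_find (ω : Ω) (h : ∃ n, 0 < n ∧ pS X n ω = 0) (t : ℕ) :
    (t : ℕ∞) < tauRet X ω ↔ t < Nat.find h := by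
  rw [tauRet_eq_find ω h, Nat.cast_lt]

end Aux2


section Recurrence

variable {X : ℕ → Ω → ℝ} {μ : Measure Ω} [IsProbabilityMeasure μ]

lemma meas_X_one (hmeas : ∀ i, Measurable (X i)) (hident : ∀ i, IdentDistrib (X i) (X 0) μ μ)
    (h1 : μ {ω | X 0 ω = 1} = 1 / 2) (i : ℕ) : μ (X i ⁻¹' {1}) = 1 / 2 := by
  have := (hident i).measure_mem_eq (s := ({1} : Set ℝ)) (measurableSet_singleton 1)
  rw [this]
  exact h1

lemma meas_X_neg_one (hmeas : ∀ i, Measurable (X i)) (hident : ∀ i, IdentDistrib (X i) (X 0) μ μ)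
    (h2 : μ {ω | X 0 ω = -1} = 1 / 2) (i : ℕ) : μ (X i ⁻¹' {-1}) = 1 / 2 := by
  have := (hident i).measure_mem_eq (s := ({-1} : Set ℝ)) (measurableSet_singleton (-1))
  rw [this]
  exact h2

lemma ae_good_steps (hmeas : ∀ i, Measurable (X i))
    (hident : ∀ i, IdentDistrib (X i) (X 0) μ μ)
    (h1 : μ {ω | X 0 ω = 1} = 1 / 2) (h2 : μ {ω | X 0 ω = -1} = 1 / 2) :
    ∀ᵐ ω ∂μ, ∀ i, X i ω = 1 ∨ X i ω = -1 := by
  rw [ae_all_iff]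
  intro i
  have hint : μ (X i ⁻¹' {1} ∪ X i ⁻¹' {-1}) = 1 := by
    rw [measure_union (by
        apply Set.disjoint_left.mpr
        intro ω hω1 hω2
        simp only [Set.mem_preimage, Set.mem_singleton_iff] at hω1 hω2
        norm_num [hω1] at hω2) ((hmeas i) (measurableSet_singleton _))]
    rw [meas_X_one hmeas hident h1 i, meas_X_neg_one hmeas hident h2 i]
    rw [show (1/2 : ℝ≥0∞) = 2⁻¹ by norm_num, ENNReal.inv_two_add_inv_two]
  have hcompl : μ (X i ⁻¹' {1} ∪ X i ⁻¹' {-1})ᶜ = 0 := by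
    rw [measure_compl (((hmeas i) (measurableSet_singleton _)).union
      ((hmeas i) (measurableSet_singleton _))) (measure_ne_top μ _), hint, measure_univ]
    simp
  apply measure_mono_null _ hcompl
  intro ω hω
  simp only [Set.mem_compl_iff, Set.mem_union, Set.mem_preimage, Set.mem_singleton_iff]
  intro hc
  exact hω hc

lemma integrable_X (hmeas : ∀ i, Measurable (X i))
    (hident : ∀ i, IdentDistrib (X i) (X 0) μ μ)
    (h1 : μ {ω | X 0 ω = 1} = 1 / 2) (h2 : μ {ω | X 0 ω = -1} = 1 / 2) (i : ℕ) :
    Integrable (X i) μ := by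
  apply Integrable.mono' (integrable_const (1 : ℝ)) (hmeas i).aestronglyMeasurable
  filter_upwards [ae_good_steps hmeas hident h1 h2] with ω hω
  rcases hω i with h | h <;> rw [h] <;> norm_num

lemma integral_X (hmeas : ∀ i, Measurable (X i))
    (hident : ∀ i, IdentDistrib (X i) (X 0) μ μ)
    (h1 : μ {ω | X 0 ω = 1} = 1 / 2) (h2 : μ {ω | X 0 ω = -1} = 1 / 2) (i : ℕ) :
    ∫ ω, X i ω ∂μ = 0 := by
  have hid := (hident i).integral_eq
  rw [hid]
  have hae : X 0 =ᵐ[μ] fun ω => (Set.indicator (X 0 ⁻¹' {1}) (fun _ => (1:ℝ)) ω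
      + Set.indicator (X 0 ⁻¹' {-1}) (fun _ => (-1:ℝ)) ω) := by
    filter_upwards [ae_good_steps hmeas hident h1 h2] with ω hω
    rcases hω 0 with h | h <;>
      simp [Set.indicator_apply, Set.mem_preimage, h] <;> norm_num
  rw [integral_congr_ae hae]
  rw [integral_add
    ((integrable_const (1:ℝ)).indicator ((hmeas 0) (measurableSet_singleton _)))
    ((integrable_const (-1:ℝ)).indicator ((hmeas 0) (measurableSet_singleton _)))]
  rw [integral_indicator_const _ ((hmeas 0) (measurableSet_singleton _)),
      integral_indicator_const _ ((hmeas 0) (measurableSet_singleton _))]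
  have e1 : μ (X 0 ⁻¹' {1}) = 1/2 := h1
  have e2 : μ (X 0 ⁻¹' {-1}) = 1/2 := h2
  rw [measureReal_def, measureReal_def, e1, e2]
  norm_num

/-- Almost surely, the walk returns to zero. -/
lemma ae_return (hmeas : ∀ i, Measurable (X i))
    (hindep : iIndepFun X μ)
    (hident : ∀ i, IdentDistrib (X i) (X 0) μ μ)
    (h1 : μ {ω | X 0 ω = 1} = 1 / 2) (h2 : μ {ω | X 0 ω = -1} = 1 / 2) :
    ∀ᵐ ω ∂μ, (∀ i, X i ω = 1 ∨ X i ω = -1) ∧ ∃ n, 0 < n ∧ pS X n ω = 0 := by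
  have hsm : ∀ i, StronglyMeasurable (X i) := fun i => (hmeas i).stronglyMeasurable
  set ℱ := MeasureTheory.Filtration.natural X hsm with hℱ
  set g : ℕ → Ω → ℝ := fun n => pS X (n + 1) with hg
  have hint : ∀ i, Integrable (X i) μ := integrable_X hmeas hident h1 h2
  have hintg : ∀ n, Integrable (g n) μ := by
    intro n
    have : g n = fun ω => ∑ i ∈ Finset.range (n+1), X i ω := by
      ext ω; exact pS_eq_sum X (n+1) ω
    rw [this]
    exact integrable_finset_sum _ (fun i _ => hint i)
  have hadp : StronglyAdapted ℱ g := by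
    intro n
    have : ∀ i ≤ n, StronglyMeasurable[ℱ n] (X i) := fun i hi =>
      ((Filtration.stronglyAdapted_natural hsm) i).mono (ℱ.mono hi)
    have hsum : StronglyMeasurable[ℱ n] (fun ω => ∑ i ∈ Finset.range (n+1), X i ω) := by
      apply Finset.stronglyMeasurable_fun_sum
      intro i hi
      exact this i (Nat.lt_succ_iff.mp (Finset.mem_range.mp hi))
    have : g n = fun ω => ∑ i ∈ Finset.range (n+1), X i ω := by
      ext ω; exact pS_eq_sum X (n+1) ω
    rw [this]
    exact hsum
  have hmart : Martingale g ℱ μ := by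
    refine ⟨hadp, ?_⟩
    intro i j hij
    induction j with
    | zero =>
      have : i = 0 := Nat.le_zero.mp hij
      subst this
      exact Filter.EventuallyEq.of_eq (condExp_of_stronglyMeasurable (ℱ.le 0) (hadp 0) (hintg 0))
    | succ j ih =>
      rcases Nat.lt_succ_iff_lt_or_eq.mp (Nat.lt_succ_of_le hij) with hij' | hij'
      · have hij'' : i ≤ j := Nat.lt_succ_iff.mp hij'
        have hgsucc : g (j + 1) = g j + X (j + 1) := by
          ext ω; exact pS_succ X (j+1) ω
        calc μ[g (j+1)|ℱ i] =ᵐ[μ] μ[g j|ℱ i] + μ[X (j+1)|ℱ i] := by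
              rw [hgsucc]; exact condExp_add (hintg j) (hint (j+1)) _
          _ =ᵐ[μ] g i := by
              have hc : μ[X (j+1)|ℱ i] =ᵐ[μ] fun _ => μ[X (j+1)] :=
                hindep.condExp_natural_ae_eq_of_lt hsm (Nat.lt_succ_of_le hij'')
              have hz : ∫ ω, X (j+1) ω ∂μ = 0 := integral_X hmeas hident h1 h2 (j+1)
              filter_upwards [ih hij'', hc] with ω h₁ h₂
              simp only [Pi.add_apply, h₁, h₂]
              simp [hz]
      · subst hij'
        exact Filter.EventuallyEq.of_eq (condExp_of_stronglyMeasurable (ℱ.le _) (hadp _) (hintg _))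
  have hbdd : ∀ᵐ ω ∂μ, ∀ i, |g (i + 1) ω - g i ω| ≤ ((1 : NNReal) : ℝ) := by
    filter_upwards [ae_good_steps hmeas hident h1 h2] with ω hω i
    have : g (i+1) ω - g i ω = X (i+1) ω := by
      simp only [hg]; rw [pS_succ]; ring
    rw [this]
    rcases hω (i+1) with h | h <;> rw [h] <;> norm_num
  have hbdd' : ∀ᵐ ω ∂μ, ∀ i, |(-g) (i + 1) ω - (-g) i ω| ≤ ((1 : NNReal) : ℝ) := by
    filter_upwards [hbdd] with ω hω i
    have he : (-g) (i + 1) ω - (-g) i ω = -(g (i + 1) ω - g i ω) := by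
      simp only [Pi.neg_apply]; ring
    rw [he, abs_neg]; exact hω i
  have htop := hmart.submartingale.bddAbove_iff_exists_tendsto hbdd
  have hbot := hmart.neg.submartingale.bddAbove_iff_exists_tendsto hbdd'
  filter_upwards [ae_good_steps hmeas hident h1 h2, htop, hbot] with ω hgood htopω hbotω
  refine ⟨hgood, ?_⟩
  by_contra hret
  push_neg at hret
  -- the walk never returns to zero, hence keeps a constant sign
  have hnoconv : ¬ ∃ c, Tendsto (fun n => g n ω) atTop (𝓝 c) := by
    rintro ⟨c, hc⟩
    have hc' : Tendsto (fun n => g (n+1) ω) atTop (𝓝 c) :=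
      hc.comp (tendsto_add_atTop_nat 1)
    have hd : Tendsto (fun n => g (n+1) ω - g n ω) atTop (𝓝 0) := by
      simpa using hc'.sub hc
    have habs : Tendsto (fun n => |g (n+1) ω - g n ω|) atTop (𝓝 0) := by
      simpa using hd.abs
    have hone : ∀ n, |g (n+1) ω - g n ω| = 1 := by
      intro n
      have : g (n+1) ω - g n ω = X (n+1) ω := by
        simp only [hg]; rw [pS_succ]; ring
      rw [this]
      rcases hgood (n+1) with h | h <;> rw [h] <;> norm_num
    have : Tendsto (fun _ : ℕ => (1:ℝ)) atTop (𝓝 0) := by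
      simpa [hone] using habs
    have := tendsto_nhds_unique this tendsto_const_nhds
    norm_num at this
  -- integrality
  have hZ : ∀ n, ∃ z : ℤ, pS X n ω = z := pS_int ω hgood
  rcases hgood 0 with hx0 | hx0
  · -- positive forever: pS n ≥ 1 for n ≥ 1
    have hpos : ∀ n, 1 ≤ pS X (n+1) ω := by
      intro n
      induction n with
      | zero => rw [pS_succ, pS_zero, hx0]; norm_num
      | succ n ih =>
        obtain ⟨z, hz⟩ := hZ (n+1)
        have hne : pS X (n+2) ω ≠ 0 := hret (n+2) (by omega)
        have hstep : pS X (n+2) ω = pS X (n+1) ω + X (n+1) ω := pS_succ X (n+1) ω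
        have hz1 : (1:ℝ) ≤ (z:ℝ) := by rw [← hz]; exact ih
        have hz1' : (1:ℤ) ≤ z := by exact_mod_cast hz1
        rcases hgood (n+1) with h | h
        · rw [hstep, h]; linarith
        · rw [hstep, h, hz]
          have hnez : (z:ℝ) + -1 ≠ 0 := by rw [hstep, h, hz] at hne; exact hne
          have hnez' : z + -1 ≠ 0 := by exact_mod_cast hnez
          have : (1:ℤ) ≤ z - 1 := by omega
          have : (1:ℝ) ≤ (z:ℝ) - 1 := by exact_mod_cast this
          linarith
    -- then g is bounded below, so -g bounded above, so g converges
    have : BddAbove (Set.range fun n => (-g) n ω) := by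
      refine ⟨-1, ?_⟩
      rintro y ⟨n, rfl⟩
      simp only [Pi.neg_apply]
      have := hpos n
      simp only [hg]
      linarith
    obtain ⟨c, hc⟩ := hbotω.mp this
    exact hnoconv ⟨-c, by simpa using hc.neg⟩
  · -- negative forever
    have hneg : ∀ n, pS X (n+1) ω ≤ -1 := by
      intro n
      induction n with
      | zero => rw [pS_succ, pS_zero, hx0]; norm_num
      | succ n ih =>
        obtain ⟨z, hz⟩ := hZ (n+1)
        have hne : pS X (n+2) ω ≠ 0 := hret (n+2) (by omega)
        have hstep : pS X (n+2) ω = pS X (n+1) ω + X (n+1) ω := pS_succ X (n+1) ω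
        have hz1 : (z:ℝ) ≤ -1 := by rw [← hz]; exact ih
        have hz1' : z ≤ -1 := by exact_mod_cast hz1
        rcases hgood (n+1) with h | h
        · rw [hstep, h, hz]
          have hnez : (z:ℝ) + 1 ≠ 0 := by rw [hstep, h, hz] at hne; exact hne
          have hnez' : z + 1 ≠ 0 := by exact_mod_cast hnez
          have : z + 1 ≤ -1 := by omega
          have : (z:ℝ) + 1 ≤ -1 := by exact_mod_cast this
          linarith
        · rw [hstep, h]; linarith
    have : BddAbove (Set.range fun n => g n ω) := by
      refine ⟨-1, ?_⟩
      rintro y ⟨n, rfl⟩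
      exact hneg n
    obtain ⟨c, hc⟩ := htopω.mp this
    exact hnoconv ⟨c, hc⟩

end Recurrence


section MeasureSide

variable {X : ℕ → Ω → ℝ} {μ : Measure Ω} [IsProbabilityMeasure μ]

/-- The event that the walk has not yet returned to `0` by time `t` and sits at `k`. -/
def Aset (X : ℕ → Ω → ℝ) (k : ℝ) (t : ℕ) : Set Ω :=
  {ω | (t : ℕ∞) < tauRet X ω ∧ pS X t ω = k}

lemma Aset_eq (X : ℕ → Ω → ℝ) (k : ℝ) (t : ℕ) :
    Aset X k t =
      (⋂ i ∈ Finset.range (t + 1), {ω | ¬(0 < i ∧ pS X i ω = 0)}) ∩ (pS X t ⁻¹' {k}) := by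
  ext ω
  simp only [Aset, Set.mem_setOf_eq, Set.mem_inter_iff, Set.mem_iInter, Finset.mem_range,
    Set.mem_preimage, Set.mem_singleton_iff, lt_tauRet_iff]
  constructor
  · rintro ⟨h, hk⟩
    exact ⟨fun i hi => h i (by omega), hk⟩
  · rintro ⟨h, hk⟩
    exact ⟨fun i hi => h i (by omega), hk⟩

lemma measurableSet_aux (hmeas : ∀ i, Measurable (X i)) (i : ℕ) :
    MeasurableSet {ω | ¬(0 < i ∧ pS X i ω = 0)} := by
  by_cases hi : 0 < i
  · have : {ω | ¬(0 < i ∧ pS X i ω = 0)} = (pS X i ⁻¹' {0})ᶜ := by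
      ext ω; simp [hi]
    rw [this]
    exact ((measurable_pS hmeas i) (measurableSet_singleton _)).compl
  · have : {ω | ¬(0 < i ∧ pS X i ω = 0)} = Set.univ := by
      ext ω; simp [hi]
    rw [this]
    exact MeasurableSet.univ

lemma measurableSet_Aset (hmeas : ∀ i, Measurable (X i)) (k : ℝ) (t : ℕ) :
    MeasurableSet (Aset X k t) := by
  rw [Aset_eq]
  exact (Finset.measurableSet_biInter _ (fun i _ => measurableSet_aux hmeas i)).inter
    ((measurable_pS hmeas t) (measurableSet_singleton _))

/-- The σ-algebra generated by the first `t` steps. -/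
def mPast (X : ℕ → Ω → ℝ) (t : ℕ) : MeasurableSpace Ω :=
  ⨆ i ∈ {k : ℕ | k < t}, MeasurableSpace.comap (X i) inferInstance

lemma measurable_X_mPast {t i : ℕ} (hi : i < t) : Measurable[mPast X t] (X i) := by
  rw [measurable_iff_comap_le]
  exact le_iSup₂ (f := fun (j : ℕ) (_ : j ∈ {k : ℕ | k < t}) =>
    MeasurableSpace.comap (X j) inferInstance) i hi

lemma measurable_pS_mPast {t n : ℕ} (hn : n ≤ t) : Measurable[mPast X t] (pS X n) := by
  induction n with
  | zero => exact @measurable_const _ _ _ (mPast X t) _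
  | succ n ih =>
    exact Measurable.add (ih (by omega)) (measurable_X_mPast (by omega))

lemma measurableSet_Aset_mPast (k : ℝ) (t : ℕ) :
    MeasurableSet[mPast X (t + 1)] (Aset X k (t + 1)) := by
  rw [Aset_eq]
  refine MeasurableSet.inter ?_ ?_
  · refine Finset.measurableSet_biInter _ (fun i hi => ?_)
    have hile : i ≤ t + 1 := by simp at hi; omega
    by_cases h0 : 0 < i
    · have : {ω | ¬(0 < i ∧ pS X i ω = 0)} = (pS X i ⁻¹' {0})ᶜ := by
        ext ω; simp [h0]
      rw [this]
      exact ((measurable_pS_mPast hile) (measurableSet_singleton _)).compl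
    · have : {ω | ¬(0 < i ∧ pS X i ω = 0)} = Set.univ := by
        ext ω; simp [h0]
      rw [this]
      exact MeasurableSet.univ
  · exact (measurable_pS_mPast le_rfl) (measurableSet_singleton _)

/-- Independence of the pre-`t` event and the value of the `t`-th step. -/
lemma mu_Aset_inter (hmeas : ∀ i, Measurable (X i))
    (hindep : iIndepFun X μ)
    (k : ℝ) (t : ℕ) {s : Set ℝ} (hs : MeasurableSet s) :
    μ (Aset X k t ∩ X t ⁻¹' s) = μ (Aset X k t) * μ (X t ⁻¹' s) := by
  cases t with
  | zero =>
    by_cases hk : k = 0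
    · have : Aset X k 0 = Set.univ := by
        ext ω
        simp only [Aset, Set.mem_setOf_eq, Set.mem_univ, iff_true]
        exact ⟨zero_lt_tauRet ω, by rw [pS_zero, hk]⟩
      rw [this, Set.univ_inter, measure_univ, one_mul]
    · have : Aset X k 0 = ∅ := by
        ext ω
        simp only [Aset, Set.mem_setOf_eq, Set.mem_empty_iff_false, iff_false, not_and]
        intro _
        rw [pS_zero]
        exact fun h => hk h.symm
      rw [this, Set.empty_inter, measure_empty, zero_mul]
  | succ t =>
    have hdisj : Disjoint {k : ℕ | k < t + 1} {t + 1} := by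
      rw [Set.disjoint_singleton_right]
      simp
    have hIndep : Indep (mPast X (t + 1))
        (⨆ i ∈ ({t + 1} : Set ℕ), MeasurableSpace.comap (X i) inferInstance) μ :=
      indep_iSup_of_disjoint (fun i => (hmeas i).comap_le) hindep hdisj
    rw [iSup_singleton] at hIndep
    have hB : MeasurableSet[MeasurableSpace.comap (X (t + 1)) inferInstance]
        (X (t + 1) ⁻¹' s) := ⟨s, hs, rfl⟩
    exact (hIndep.indepSet_of_measurableSet (measurableSet_Aset_mPast k t)
      hB).measure_inter_eq_mul

/-- Upcrossing event at time `t`: not yet returned, at `k`, stepping up. -/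
def Uset (X : ℕ → Ω → ℝ) (k : ℝ) (t : ℕ) : Set Ω := Aset X k t ∩ X t ⁻¹' {1}

/-- Downcrossing event at time `t`: not yet returned, at `k`, stepping down. -/
def Dset (X : ℕ → Ω → ℝ) (k : ℝ) (t : ℕ) : Set Ω := Aset X k t ∩ X t ⁻¹' {-1}

lemma mu_Uset (hmeas : ∀ i, Measurable (X i))
    (hindep : iIndepFun X μ)
    (hident : ∀ i, IdentDistrib (X i) (X 0) μ μ)
    (h1 : μ {ω | X 0 ω = 1} = 1 / 2) (k : ℝ) (t : ℕ) :
    μ (Uset X k t) = μ (Aset X k t) * (1 / 2) := by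
  rw [Uset, mu_Aset_inter hmeas hindep k t (measurableSet_singleton _),
    meas_X_one hmeas hident h1 t]

lemma mu_Dset (hmeas : ∀ i, Measurable (X i))
    (hindep : iIndepFun X μ)
    (hident : ∀ i, IdentDistrib (X i) (X 0) μ μ)
    (h2 : μ {ω | X 0 ω = -1} = 1 / 2) (k : ℝ) (t : ℕ) :
    μ (Dset X k t) = μ (Aset X k t) * (1 / 2) := by
  rw [Dset, mu_Aset_inter hmeas hindep k t (measurableSet_singleton _),
    meas_X_neg_one hmeas hident h2 t]

end MeasureSide


section Pathwise

variable {X : ℕ → Ω → ℝ}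

lemma tsum_indicator_card {s : ℕ → Set Ω} (ω : Ω) (N : ℕ) (P : ℕ → Prop) [DecidablePred P]
    (h : ∀ t, ω ∈ s t ↔ (t < N ∧ P t)) :
    ∑' t, Set.indicator (s t) (fun _ => (1 : ℝ≥0∞)) ω = ((Finset.range N).filter P).card := by
  classical
  have h1 : ∀ t, Set.indicator (s t) (fun _ => (1 : ℝ≥0∞)) ω
      = if t < N ∧ P t then 1 else 0 := by
    intro t
    rw [Set.indicator_apply]
    by_cases hc : ω ∈ s t
    · rw [if_pos hc, if_pos ((h t).mp hc)]
    · rw [if_neg hc, if_neg (fun hx => hc ((h t).mpr hx))]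
  have h2 : ∑' t, (if t < N ∧ P t then (1 : ℝ≥0∞) else 0)
      = ∑ t ∈ Finset.range N, (if t < N ∧ P t then (1 : ℝ≥0∞) else 0) :=
    tsum_eq_sum (fun t ht => by
      rw [Finset.mem_range] at ht; rw [if_neg (fun hx => ht hx.1)])
  have h3 : ∑ t ∈ Finset.range N, (if t < N ∧ P t then (1 : ℝ≥0∞) else 0)
      = ∑ t ∈ Finset.range N, (if P t then (1 : ℝ≥0∞) else 0) :=
    Finset.sum_congr rfl (fun t ht =>
      if_congr (and_iff_right (Finset.mem_range.mp ht)) rfl rfl)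
  have h4 : ∑ t ∈ Finset.range N, (if P t then (1 : ℝ≥0∞) else 0)
      = ((Finset.range N).filter P).card := by rw [Finset.sum_boole]
  rw [tsum_congr h1, h2, h3, h4]

/-- The pathwise facts: on a good returning path, the number of upcrossings of level `K`
(as a `tsum` of indicators) equals the number of downcrossings, and equals `nUp`. -/
lemma pathwise_counts (ω : Ω) (hgood : ∀ i, X i ω = 1 ∨ X i ω = -1)
    (hret : ∃ n, 0 < n ∧ pS X n ω = 0) (K : ℕ) (hK : 1 ≤ K) :
    (∑' t, Set.indicator (Uset X ((K : ℝ) - 1) t) (fun _ => (1 : ℝ≥0∞)) ω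
      = ∑' t, Set.indicator (Dset X (K : ℝ) t) (fun _ => (1 : ℝ≥0∞)) ω)
    ∧ ∑' t, Set.indicator (Uset X ((K : ℝ) - 1) t) (fun _ => (1 : ℝ≥0∞)) ω
      = (nUp X (K : ℝ) ω : ℝ≥0∞) := by
  classical
  set N := Nat.find hret with hN
  have hFex : ∀ n, ∃ z : ℤ, pS X n ω = z := pS_int ω hgood
  set F : ℕ → ℤ := fun n => (hFex n).choose with hFdef
  have hF : ∀ n, pS X n ω = (F n : ℝ) := fun n => (hFex n).choose_spec
  have hF0 : F 0 = 0 := by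
    have := hF 0
    rw [pS_zero] at this
    exact_mod_cast this.symm
  have hFstep : ∀ t, F (t + 1) = F t + 1 ∨ F (t + 1) = F t - 1 := by
    intro t
    rcases hgood t with h | h
    · left
      have : (F (t+1) : ℝ) = (F t : ℝ) + 1 := by
        rw [← hF, ← hF, pS_succ, h]
      exact_mod_cast this
    · right
      have : (F (t+1) : ℝ) = (F t : ℝ) - 1 := by
        rw [← hF, ← hF, pS_succ, h]; ring
      exact_mod_cast this
  have hFN : F N = 0 := by
    have := (Nat.find_spec hret).2
    rw [hF] at this
    exact_mod_cast this
  have htau : ∀ t : ℕ, ((t : ℕ∞) < tauRet X ω ↔ t < N) :=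
    fun t => lt_tauRet_iff_lt_find ω hret t
  -- membership characterizations
  have hUmem : ∀ t, ω ∈ Uset X ((K : ℝ) - 1) t
      ↔ (t < N ∧ (F t = (K : ℤ) - 1 ∧ F (t + 1) = (K : ℤ))) := by
    intro t
    simp only [Uset, Aset, Set.mem_inter_iff, Set.mem_setOf_eq, Set.mem_preimage,
      Set.mem_singleton_iff]
    rw [htau t]
    constructor
    · rintro ⟨⟨hlt, hval⟩, hx⟩
      refine ⟨hlt, ?_, ?_⟩
      · have : (F t : ℝ) = (K : ℝ) - 1 := by rw [← hF]; exact hval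
        have : (F t : ℝ) = (((K : ℤ) - 1 : ℤ) : ℝ) := by push_cast; linarith
        exact_mod_cast this
      · have h5 : (F (t+1) : ℝ) = (((K : ℤ) : ℤ) : ℝ) := by
          rw [← hF, pS_succ, hval, hx]; push_cast; ring
        exact_mod_cast h5
    · rintro ⟨hlt, hf1, hf2⟩
      have hval : pS X t ω = (K : ℝ) - 1 := by
        rw [hF t, hf1]; push_cast; ring
      have hval2 : pS X (t+1) ω = (K : ℝ) := by
        rw [hF (t+1), hf2]; norm_cast
      refine ⟨⟨hlt, hval⟩, ?_⟩
      have := pS_succ X t ω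
      rw [hval, hval2] at this
      linarith
  have hDmem : ∀ t, ω ∈ Dset X (K : ℝ) t
      ↔ (t < N ∧ (F t = (K : ℤ) ∧ F (t + 1) = (K : ℤ) - 1)) := by
    intro t
    simp only [Dset, Aset, Set.mem_inter_iff, Set.mem_setOf_eq, Set.mem_preimage,
      Set.mem_singleton_iff]
    rw [htau t]
    constructor
    · rintro ⟨⟨hlt, hval⟩, hx⟩
      refine ⟨hlt, ?_, ?_⟩
      · have h5 : (F t : ℝ) = (((K : ℤ) : ℤ) : ℝ) := by
          rw [← hF, hval]; push_cast; ring
        exact_mod_cast h5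
      · have : (F (t+1) : ℝ) = (K : ℝ) - 1 := by
          rw [← hF, pS_succ, hval, hx]; ring
        have : (F (t+1) : ℝ) = (((K : ℤ) - 1 : ℤ) : ℝ) := by push_cast; linarith
        exact_mod_cast this
    · rintro ⟨hlt, hf1, hf2⟩
      have hval : pS X t ω = (K : ℝ) := by rw [hF t, hf1]; norm_cast
      have hval2 : pS X (t+1) ω = (K : ℝ) - 1 := by
        rw [hF (t+1), hf2]; push_cast; ring
      refine ⟨⟨hlt, hval⟩, ?_⟩
      have := pS_succ X t ω
      rw [hval, hval2] at this
      linarith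
  have hU := tsum_indicator_card ω N _ hUmem
  have hD := tsum_indicator_card ω N _ hDmem
  have hcount := count_up_eq_count_down F hF0 hFstep (K : ℤ) (by exact_mod_cast hK) N hFN
  constructor
  · rw [hU, hD, hcount]
  · rw [hU]
    congr 1
    have hseteq : {t : ℕ | (t : ℕ∞) < tauRet X ω ∧ pS X t ω = (K : ℝ) - 1
        ∧ pS X (t + 1) ω = (K : ℝ)}
        = ↑((Finset.range N).filter (fun t => F t = (K : ℤ) - 1 ∧ F (t + 1) = (K : ℤ))) := by
      ext t
      simp only [Set.mem_setOf_eq, Finset.coe_filter, Finset.mem_range]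
      rw [htau t]
      constructor
      · rintro ⟨hlt, hv1, hv2⟩
        refine ⟨hlt, ?_, ?_⟩
        · have : (F t : ℝ) = (((K : ℤ) - 1 : ℤ) : ℝ) := by
            rw [← hF]; push_cast; linarith
          exact_mod_cast this
        · have h5 : (F (t+1) : ℝ) = (((K : ℤ) : ℤ) : ℝ) := by
            rw [← hF, hv2]; push_cast; ring
          exact_mod_cast h5
      · rintro ⟨hlt, hf1, hf2⟩
        refine ⟨hlt, ?_, ?_⟩
        · rw [hF t, hf1]; push_cast; ring
        · rw [hF (t+1), hf2]; norm_cast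
    rw [nUp, hseteq, Set.ncard_coe_finset]

end Pathwise

/-- For the simplest symmetric random walk (i.i.d. `±1` steps with
probability `1/2` each), the expected number of upcrossings of any positive integer level
`α` before the first return to `0` equals `1/2`. -/
theorem stmt10 (μ : Measure Ω) [IsProbabilityMeasure μ]
    (X : ℕ → Ω → ℝ) (hmeas : ∀ i, Measurable (X i))
    (hindep : iIndepFun X μ)
    (hident : ∀ i, IdentDistrib (X i) (X 0) μ μ)
    (h1 : μ {ω | X 0 ω = 1} = 1 / 2) (h2 : μ {ω | X 0 ω = -1} = 1 / 2) :
    ∀ α : ℕ, 1 ≤ α → ∫ ω, (nUp X (α : ℝ) ω : ℝ) ∂μ = 1 / 2 := by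
  intro α hα
  classical
  have hae := ae_return hmeas hindep hident h1 h2
  set G : ℕ → ℝ≥0∞ := fun K => ∑' t, μ (Aset X (K : ℝ) t) with hGdef
  have hUmeas : ∀ (k : ℝ) (t : ℕ), MeasurableSet (Uset X k t) := fun k t =>
    (measurableSet_Aset hmeas k t).inter ((hmeas t) (measurableSet_singleton _))
  have hDmeas : ∀ (k : ℝ) (t : ℕ), MeasurableSet (Dset X k t) := fun k t =>
    (measurableSet_Aset hmeas k t).inter ((hmeas t) (measurableSet_singleton _))
  have hlintU : ∀ k : ℝ,
      ∫⁻ ω, ∑' t, Set.indicator (Uset X k t) (fun _ => (1 : ℝ≥0∞)) ω ∂μ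
        = ∑' t, μ (Uset X k t) := by
    intro k
    rw [lintegral_tsum (fun t => (measurable_const.indicator (hUmeas k t)).aemeasurable)]
    exact tsum_congr fun t => by
      rw [lintegral_indicator_const (hUmeas k t), one_mul]
  have hlintD : ∀ k : ℝ,
      ∫⁻ ω, ∑' t, Set.indicator (Dset X k t) (fun _ => (1 : ℝ≥0∞)) ω ∂μ
        = ∑' t, μ (Dset X k t) := by
    intro k
    rw [lintegral_tsum (fun t => (measurable_const.indicator (hDmeas k t)).aemeasurable)]
    exact tsum_congr fun t => by
      rw [lintegral_indicator_const (hDmeas k t), one_mul]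
  have htsumU : ∀ k : ℝ, ∑' t, μ (Uset X k t) = (∑' t, μ (Aset X k t)) * (1 / 2) := by
    intro k
    rw [← ENNReal.tsum_mul_right]
    exact tsum_congr fun t => mu_Uset hmeas hindep hident h1 k t
  have htsumD : ∀ k : ℝ, ∑' t, μ (Dset X k t) = (∑' t, μ (Aset X k t)) * (1 / 2) := by
    intro k
    rw [← ENNReal.tsum_mul_right]
    exact tsum_congr fun t => mu_Dset hmeas hindep hident h2 k t
  have hGsucc : ∀ K : ℕ, G (K + 1) = G K := by
    intro K
    have hcast : (((K + 1 : ℕ) : ℝ)) - 1 = ((K : ℕ) : ℝ) := by push_cast; ring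
    have haeUD : ∀ᵐ ω ∂μ,
        ∑' t, Set.indicator (Uset X (((K + 1 : ℕ) : ℝ) - 1) t) (fun _ => (1 : ℝ≥0∞)) ω
        = ∑' t, Set.indicator (Dset X ((K + 1 : ℕ) : ℝ) t) (fun _ => (1 : ℝ≥0∞)) ω := by
      filter_upwards [hae] with ω hω
      exact (pathwise_counts ω hω.1 hω.2 (K + 1) (by omega)).1
    have h5 : ∑' t, μ (Uset X (((K + 1 : ℕ) : ℝ) - 1) t)
        = ∑' t, μ (Dset X ((K + 1 : ℕ) : ℝ) t) := by
      rw [← hlintU, ← hlintD]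
      exact lintegral_congr_ae haeUD
    rw [hcast] at h5
    rw [htsumU, htsumD] at h5
    have hhalf0 : (1 / 2 : ℝ≥0∞) ≠ 0 := by norm_num
    have hhalft : (1 / 2 : ℝ≥0∞) ≠ ∞ := by norm_num
    have := (ENNReal.mul_left_inj hhalf0 hhalft).mp h5
    exact this.symm
  have hG0 : G 0 = 1 := by
    have hzero : ∀ t : ℕ, t ≠ 0 → μ (Aset X ((0 : ℕ) : ℝ) t) = 0 := by
      intro t ht
      have : Aset X ((0 : ℕ) : ℝ) t = ∅ := by
        ext ω
        simp only [Aset, Set.mem_setOf_eq, Set.mem_empty_iff_false, iff_false, not_and]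
        intro hlt hval
        exact (lt_tauRet_iff ω t).mp hlt t le_rfl
          ⟨Nat.pos_of_ne_zero ht, by exact_mod_cast hval⟩
      rw [this, measure_empty]
    have huniv : Aset X ((0 : ℕ) : ℝ) 0 = Set.univ := by
      ext ω
      simp only [Aset, Set.mem_setOf_eq, Set.mem_univ, iff_true]
      exact ⟨zero_lt_tauRet ω, by rw [pS_zero]; norm_num⟩
    show (∑' t, μ (Aset X ((0 : ℕ) : ℝ) t)) = 1
    rw [tsum_eq_single 0 hzero, huniv, measure_univ]
  have hGall : ∀ K : ℕ, G K = 1 := by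
    intro K
    induction K with
    | zero => exact hG0
    | succ n ih => rw [hGsucc n]; exact ih
  -- the key lintegral computation
  have hlevel : ((α : ℝ)) - 1 = (((α - 1 : ℕ)) : ℝ) := by
    rw [Nat.cast_sub hα]; norm_num
  have hkey : ∫⁻ ω, ∑' t, Set.indicator (Uset X ((α : ℝ) - 1) t) (fun _ => (1 : ℝ≥0∞)) ω ∂μ
      = 1 / 2 := by
    rw [hlintU, htsumU]
    rw [hlevel]
    have : (∑' t, μ (Aset X (((α - 1 : ℕ)) : ℝ) t)) =G (α - 1) := rfl
    rw [this, hGall, one_mul]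
  -- conversion to the Bochner integral
  have haef : (fun ω => (nUp X (α : ℝ) ω : ℝ)) =ᵐ[μ]
      fun ω => (∑' t, Set.indicator (Uset X ((α : ℝ) - 1) t) (fun _ => (1 : ℝ≥0∞)) ω).toReal := by
    filter_upwards [hae] with ω hω
    rw [(pathwise_counts ω hω.1 hω.2 α hα).2]
    simp
  have hmeasg : Measurable
      (fun ω => (∑' t, Set.indicator (Uset X ((α : ℝ) - 1) t) (fun _ => (1 : ℝ≥0∞)) ω).toReal) :=
    ENNReal.measurable_toReal.comp
      (Measurable.ennreal_tsum (fun t => measurable_const.indicator (hUmeas _ t)))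
  rw [integral_congr_ae haef]
  rw [integral_eq_lintegral_of_nonneg_ae
    (Filter.Eventually.of_forall (fun ω => ENNReal.toReal_nonneg))
    hmeasg.aestronglyMeasurable]
  have hofReal : ∫⁻ ω, ENNReal.ofReal
      ((∑' t, Set.indicator (Uset X ((α : ℝ) - 1) t) (fun _ => (1 : ℝ≥0∞)) ω).toReal) ∂μ
      = ∫⁻ ω, ∑' t, Set.indicator (Uset X ((α : ℝ) - 1) t) (fun _ => (1 : ℝ≥0∞)) ω ∂μ := by
    apply lintegral_congr_ae
    filter_upwards [hae] with ω hω
    rw [(pathwise_counts ω hω.1 hω.2 α hα).2]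
    simp
  rw [hofReal, hkey]
  norm_num

end
end

section
/- Let X₁, X₂, … be i.i.d. random variables with P(X₁ = 2) = 1/2, P(X₁ = −1) = 1/4 and P(X₁ = −3) = 1/4, and let S_t be the associated random walk. Then the expected number of crossings of level 1 satisfies E L_1 = 1/2. -/
open MeasureTheory ProbabilityTheory Filter

noncomputable section

variable {Ω : Type*} [MeasurableSpace Ω]

/-- Conditional expectation of `f` given the event `A`. -/
def cexp (μ : Measure Ω) (A : Set Ω) (f : Ω → ℝ) : ℝ :=
  (∫ ω in A, f ω ∂μ) / (μ A).toReal

/-- The stopping time `τ`: the first time `t > 1` with `S_t ≤ 0` if `X₁ > 0`, and `1`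
otherwise. -/
def tauRW (X : ℕ → Ω → ℝ) (ω : Ω) : ℕ∞ :=
  if 0 < X 0 ω then sInf {n : ℕ∞ | ∃ t : ℕ, n = (t : ℕ∞) ∧ 1 < t ∧ pS X t ω ≤ 0}
  else 1

/-- The number of level-crossings `L_α`: the number of `t ∈ {1, …, τ}` with
`S_{t-1} < α` and `S_t ≥ α`. -/
def nCross (X : ℕ → Ω → ℝ) (α : ℝ) (ω : Ω) : ℕ :=
  Set.ncard {t : ℕ | 1 ≤ t ∧ (t : ℕ∞) ≤ tauRW X ω ∧ pS X (t - 1) ω < α ∧ α ≤ pS X t ω}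

/-- The expected number of level-crossings `E L_α`. -/
def EL (μ : Measure Ω) (X : ℕ → Ω → ℝ) (α : ℝ) : ℝ :=
  ∫ ω, (nCross X α ω : ℝ) ∂μ

/-- The value `S_τ` of the walk at the stopping time (junk value `0` if `τ = ∞`). -/
def Stau (X : ℕ → Ω → ℝ) (ω : Ω) : ℝ :=
  pS X (tauRW X ω).toNat ω

/-- The pair `(t_i(α), τ_i(α))` of the `i`-th crossing time and the `i`-th descent time
(junk values given by `sInf ∅ = 0` when they do not exist). -/
def cdTimes (X : ℕ → Ω → ℝ) (α : ℝ) : ℕ → Ω → ℕ × ℕ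
  | 0 => fun _ => (0, 0)
  | (i + 1) => fun ω =>
      let t := sInf {t : ℕ | (cdTimes X α i ω).2 < t ∧ (t : ℕ∞) ≤ tauRW X ω ∧ α ≤ pS X t ω}
      (t, sInf {s : ℕ | t < s ∧ pS X s ω < α})

/-- The event `𝔄_i(α)`: the `i`-th crossing of the level `α` occurs during `[0, τ]`. -/
def crossEv (X : ℕ → Ω → ℝ) (α : ℝ) : ℕ → Set Ω
  | 0 => Set.univ
  | (i + 1) => crossEv X α i ∩
      {ω | ∃ t : ℕ, (cdTimes X α i ω).2 < t ∧ (t : ℕ∞) ≤ tauRW X ω ∧ α ≤ pS X t ω}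

/-- Assumption 1 of the paper at the level `α`: `P(𝔄₂(α)) > 0`,
`E[S_{t₁(α)-1} ∣ 𝔄₁(α)] > 0`, `E[S_{τ₁(α)} ∣ 𝔄₁(α)] > 0`,
`E[S_{t₂(α)-1} ∣ 𝔄₂(α)] = E[S_{t₁(α)-1} ∣ 𝔄₁(α)]` and
`E[S_{τ₂(α)} ∣ 𝔄₂(α)] = E[S_{τ₁(α)} ∣ 𝔄₁(α)]`. -/
def Assumption1 (μ : Measure Ω) (X : ℕ → Ω → ℝ) (α : ℝ) : Prop :=
  0 < μ (crossEv X α 2) ∧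
  0 < cexp μ (crossEv X α 1) (fun ω => pS X ((cdTimes X α 1 ω).1 - 1) ω) ∧
  0 < cexp μ (crossEv X α 1) (fun ω => pS X ((cdTimes X α 1 ω).2) ω) ∧
  cexp μ (crossEv X α 2) (fun ω => pS X ((cdTimes X α 2 ω).1 - 1) ω)
    = cexp μ (crossEv X α 1) (fun ω => pS X ((cdTimes X α 1 ω).1 - 1) ω) ∧
  cexp μ (crossEv X α 2) (fun ω => pS X ((cdTimes X α 2 ω).2) ω)
    = cexp μ (crossEv X α 1) (fun ω => pS X ((cdTimes X α 1 ω).2) ω)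

lemma pS_one' (X : ℕ → Ω → ℝ) (ω : Ω) : pS X 1 ω = X 0 ω := by
  show pS X 0 ω + X 0 ω = X 0 ω
  show (0 : ℝ) + X 0 ω = X 0 ω
  ring

lemma nCross_eq_indicator (X : ℕ → Ω → ℝ) (ω : Ω)
    (hω : ∀ i, X i ω = 2 ∨ X i ω = -1 ∨ X i ω = -3) :
    ((nCross X 1 ω : ℕ) : ℝ) = Set.indicator {ω' | X 0 ω' = 2} (fun _ => (1 : ℝ)) ω := by
  have hint : ∀ t : ℕ, ∃ k : ℤ, pS X t ω = (k : ℝ) := by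
    intro t
    induction t with
    | zero => exact ⟨0, by simp [pS]⟩
    | succ n ih =>
      obtain ⟨k, hk⟩ := ih
      rcases hω n with h | h | h
      · exact ⟨k + 2, by show pS X n ω + X n ω = _; rw [hk, h]; push_cast; ring⟩
      · exact ⟨k - 1, by show pS X n ω + X n ω = _; rw [hk, h]; push_cast; ring⟩
      · exact ⟨k - 3, by show pS X n ω + X n ω = _; rw [hk, h]; push_cast; ring⟩
  by_cases h2 : X 0 ω = 2
  · have hpos : 0 < X 0 ω := by rw [h2]; norm_num
    have htau1 : (1 : ℕ∞) ≤ tauRW X ω := by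
      rw [tauRW, if_pos hpos]
      refine le_sInf ?_
      rintro n ⟨t, rfl, ht, -⟩
      exact_mod_cast Nat.one_le_iff_ne_zero.mpr (by omega)
    have hset : {t : ℕ | 1 ≤ t ∧ (t : ℕ∞) ≤ tauRW X ω ∧ pS X (t - 1) ω < 1 ∧ 1 ≤ pS X t ω}
        = {1} := by
      ext t
      simp only [Set.mem_setOf_eq, Set.mem_singleton_iff]
      constructor
      · rintro ⟨h1t, htau, hlt, hge⟩
        by_contra hne
        have ht2 : 2 ≤ t := by omega
        rcases eq_or_lt_of_le ht2 with h | h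
        · rw [← h] at hlt
          rw [show (2 : ℕ) - 1 = 1 from rfl, pS_one', h2] at hlt
          linarith
        · have h11 : 1 < t - 1 := by omega
          obtain ⟨k, hk⟩ := hint (t - 1)
          have hk1 : k < 1 := by exact_mod_cast hk ▸ hlt
          have hk0 : pS X (t - 1) ω ≤ 0 := by
            rw [hk]; exact_mod_cast (by omega : k ≤ 0)
          have hmem : ((t - 1 : ℕ) : ℕ∞) ∈
              {n : ℕ∞ | ∃ s : ℕ, n = (s : ℕ∞) ∧ 1 < s ∧ pS X s ω ≤ 0} :=
            ⟨t - 1, rfl, h11, hk0⟩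
          have hle' : tauRW X ω ≤ ((t - 1 : ℕ) : ℕ∞) := by
            rw [tauRW, if_pos hpos]
            exact sInf_le hmem
          have : (t : ℕ∞) ≤ ((t - 1 : ℕ) : ℕ∞) := htau.trans hle'
          have : t ≤ t - 1 := by exact_mod_cast this
          omega
      · rintro rfl
        refine ⟨le_refl 1, htau1, ?_, ?_⟩
        · show (0 : ℝ) < 1; norm_num
        · rw [pS_one', h2]; norm_num
    rw [nCross, hset, Set.ncard_singleton,
      Set.indicator_of_mem (show ω ∈ {ω' | X 0 ω' = 2} from h2) (fun _ => (1 : ℝ))]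
    norm_num
  · have hle : X 0 ω ≤ 0 := by
      rcases hω 0 with h | h | h
      · exact absurd h h2
      · linarith
      · linarith
    have htau : tauRW X ω = 1 := by rw [tauRW, if_neg (not_lt.mpr hle)]
    have hset : {t : ℕ | 1 ≤ t ∧ (t : ℕ∞) ≤ tauRW X ω ∧ pS X (t - 1) ω < 1 ∧ 1 ≤ pS X t ω}
        = ∅ := by
      ext t
      simp only [Set.mem_setOf_eq, Set.mem_empty_iff_false, iff_false]
      rintro ⟨h1t, htau', hlt, hge⟩
      rw [htau] at htau'
      have ht1 : t ≤ 1 := by exact_mod_cast htau'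
      have : t = 1 := le_antisymm ht1 h1t
      subst this
      rw [pS_one'] at hge
      linarith
    rw [nCross, hset, Set.ncard_empty,
      Set.indicator_of_notMem (show ω ∉ {ω' | X 0 ω' = 2} from h2) (fun _ => (1 : ℝ))]
    norm_num

/-- For the random walk whose step takes the value `2` with probability
`1/2`, the value `-1` with probability `1/4` and the value `-3` with probability `1/4`,
one has `E L_1 = 1/2`. -/
theorem stmt13 (μ : Measure Ω) [IsProbabilityMeasure μ]
    (X : ℕ → Ω → ℝ) (hmeas : ∀ i, Measurable (X i))
    (hindep : iIndepFun X μ)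
    (hident : ∀ i, IdentDistrib (X i) (X 0) μ μ)
    (h1 : μ {ω | X 0 ω = 2} = 1 / 2) (h2 : μ {ω | X 0 ω = -1} = 1 / 4)
    (h3 : μ {ω | X 0 ω = -3} = 1 / 4) :
    EL μ X 1 = 1 / 2 := by
  have hs3 : MeasurableSet ({2, -1, -3} : Set ℝ) := by measurability
  have hmem0 : μ (X 0 ⁻¹' {2, -1, -3}) = 1 := by
    have hu : X 0 ⁻¹' ({2, -1, -3} : Set ℝ)
        = {ω | X 0 ω = 2} ∪ ({ω | X 0 ω = -1} ∪ {ω | X 0 ω = -3}) := by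
      ext ω; simp [Set.mem_insert_iff]
    have hd1 : Disjoint {ω | X 0 ω = -1} {ω | X 0 ω = -3} := by
      rw [Set.disjoint_left]; rintro ω ha hb
      simp only [Set.mem_setOf_eq] at ha hb; linarith [ha ▸ hb]
    have hd2 : Disjoint {ω | X 0 ω = 2} ({ω | X 0 ω = -1} ∪ {ω | X 0 ω = -3}) := by
      rw [Set.disjoint_left]; rintro ω ha hb
      simp only [Set.mem_union, Set.mem_setOf_eq] at ha hb
      rcases hb with hb | hb <;> linarith [ha ▸ hb]
    have hm1 : MeasurableSet {ω | X 0 ω = -1} := (hmeas 0) (measurableSet_singleton _)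
    have hm3 : MeasurableSet {ω | X 0 ω = -3} := (hmeas 0) (measurableSet_singleton _)
    rw [hu, measure_union hd2 (hm1.union hm3), measure_union hd1 hm3, h1, h2, h3]
    have h44 : (1 : ENNReal) / 4 + 1 / 4 = 1 / 2 := by
      rw [ENNReal.div_add_div_same]
      rw [← ENNReal.toReal_eq_toReal_iff' (ENNReal.div_lt_top (by norm_num) (by norm_num)).ne
        (ENNReal.div_lt_top (by norm_num) (by norm_num)).ne]
      rw [ENNReal.toReal_div, ENNReal.toReal_div]
      norm_num
    rw [h44, ENNReal.add_halves]
  have hae : ∀ᵐ ω ∂μ, ∀ i, X i ω = 2 ∨ X i ω = -1 ∨ X i ω = -3 := by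
    rw [ae_all_iff]
    intro i
    have hmi : μ (X i ⁻¹' {2, -1, -3}) = 1 := ((hident i).measure_mem_eq hs3).trans hmem0
    have hc : μ (X i ⁻¹' ({2, -1, -3} : Set ℝ))ᶜ = 0 := by
      rw [measure_compl ((hmeas i) hs3) (measure_ne_top _ _), hmi, measure_univ, tsub_self]
    have hseq : {ω | ¬(X i ω = 2 ∨ X i ω = -1 ∨ X i ω = -3)}
        = (X i ⁻¹' ({2, -1, -3} : Set ℝ))ᶜ := by
      ext ω; simp [Set.mem_insert_iff]
    rw [ae_iff, hseq]
    exact hc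
  have hind : (fun ω => ((nCross X 1 ω : ℕ) : ℝ))
      =ᵐ[μ] Set.indicator {ω' | X 0 ω' = 2} (fun _ => (1 : ℝ)) :=
    hae.mono fun ω hω => nCross_eq_indicator X ω hω
  rw [EL, integral_congr_ae hind]
  have hm2 : MeasurableSet {ω | X 0 ω = 2} := (hmeas 0) (measurableSet_singleton _)
  rw [show (fun _ : Ω => (1 : ℝ)) = (1 : Ω → ℝ) from rfl, integral_indicator_one hm2, measureReal_def, h1]
  norm_num [ENNReal.toReal_div]

end
end

section
/- Let X₁, X₂, … be i.i.d. random variables with P(X₁ = 2) = 1/2, P(X₁ = −1) = 1/4 and P(X₁ = −3) = 1/4, and let S_t be the associated random walk. Then the expected number of crossings of level 2 satisfies E L_2 > 1/2. -/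
set_option linter.unusedSectionVars false
set_option maxHeartbeats 1000000


open MeasureTheory ProbabilityTheory Filter
open scoped ENNReal

noncomputable section

variable {Ω : Type*} [MeasurableSpace Ω]

namespace RWaux

variable {X : ℕ → Ω → ℝ}

lemma le_tau_iff {t : ℕ} {ω : Ω} :
    (t : ℕ∞) ≤ tauRW X ω ↔ t ≤ 1 ∨ (0 < X 0 ω ∧ ∀ s, 1 < s → s < t → 0 < pS X s ω) := by
  unfold tauRW
  by_cases hX : 0 < X 0 ω
  · rw [if_pos hX]
    constructor
    · intro h
      rcases le_or_gt t 1 with ht | ht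
      · exact Or.inl ht
      · refine Or.inr ⟨hX, fun s hs1 hst => ?_⟩
        by_contra hle
        push_neg at hle
        have hmem : ((s : ℕ∞)) ∈ {n : ℕ∞ | ∃ t : ℕ, n = (t : ℕ∞) ∧ 1 < t ∧ pS X t ω ≤ 0} :=
          ⟨s, rfl, hs1, hle⟩
        have := le_trans h (sInf_le hmem)
        exact absurd (Nat.cast_le.mp this) (by omega)
    · intro h
      refine le_sInf fun n hn => ?_
      obtain ⟨s, rfl, hs1, hs0⟩ := hn
      rcases h with ht | ⟨_, h⟩
      · exact Nat.cast_le.mpr (by omega)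
      · by_contra hlt
        push_neg at hlt
        have hst : s < t := Nat.cast_lt.mp hlt
        exact absurd (h s hs1 hst) (not_lt.mpr hs0)
  · rw [if_neg hX]
    constructor
    · intro h
      exact Or.inl (by exact_mod_cast h)
    · rintro (ht | ⟨h0, _⟩)
      · exact_mod_cast ht
      · exact absurd h0 hX

lemma lt_tau_iff {t : ℕ} {ω : Ω} :
    (t : ℕ∞) < tauRW X ω ↔ t = 0 ∨ (0 < X 0 ω ∧ ∀ s, 1 < s → s ≤ t → 0 < pS X s ω) := by
  have : (t : ℕ∞) < tauRW X ω ↔ ((t + 1 : ℕ) : ℕ∞) ≤ tauRW X ω := by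
    rw [Nat.cast_add, Nat.cast_one, ENat.add_one_le_iff (by simp)]
  rw [this, le_tau_iff]
  constructor
  · rintro (h | ⟨h0, h⟩)
    · exact Or.inl (by omega)
    · exact Or.inr ⟨h0, fun s hs1 hst => h s hs1 (by omega)⟩
  · rintro (h | ⟨h0, h⟩)
    · exact Or.inl (by omega)
    · exact Or.inr ⟨h0, fun s hs1 hst => h s hs1 (by omega)⟩

/-- good paths -/
def Good (X : ℕ → Ω → ℝ) (ω : Ω) : Prop := ∀ i, X i ω = 2 ∨ X i ω = -1 ∨ X i ω = -3

lemma pS_int (hg : Good X ω) : ∀ t, ∃ z : ℤ, pS X t ω = z := by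
  intro t
  induction t with
  | zero => exact ⟨0, by simp [pS]⟩
  | succ n ih =>
    obtain ⟨z, hz⟩ := ih
    rcases hg n with h | h | h
    · refine ⟨z + 2, ?_⟩; show pS X n ω + X n ω = _; rw [hz, h]; push_cast; ring
    · refine ⟨z - 1, ?_⟩; show pS X n ω + X n ω = _; rw [hz, h]; push_cast; ring
    · refine ⟨z - 3, ?_⟩; show pS X n ω + X n ω = _; rw [hz, h]; push_cast; ring

lemma eq_one_of_pos_lt_two {ω : Ω} (hg : Good X ω) {t : ℕ}
    (h0 : 0 < pS X t ω) (h2 : pS X t ω < 2) : pS X t ω = 1 := by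
  obtain ⟨z, hz⟩ := pS_int hg t
  rw [hz] at h0 h2 ⊢
  have : (0 : ℤ) < z := by exact_mod_cast h0
  have : z < 2 := by exact_mod_cast h2
  have : z = 1 := by omega
  simp [this]


def visit (X : ℕ → Ω → ℝ) (t : ℕ) (ω : Ω) : Prop :=
  1 ≤ t ∧ pS X t ω = 1 ∧ (t : ℕ∞) < tauRW X ω

def crossAt (X : ℕ → Ω → ℝ) (α : ℝ) (t : ℕ) (ω : Ω) : Prop :=
  1 ≤ t ∧ (t : ℕ∞) ≤ tauRW X ω ∧ pS X (t - 1) ω < α ∧ α ≤ pS X t ω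

open scoped Classical in
/-- Number of visits (to state 1, before τ) at times `< n`. -/
def nvb (X : ℕ → Ω → ℝ) (n : ℕ) (ω : Ω) : ℕ :=
  ((Finset.range n).filter (fun t => visit X t ω)).card

lemma pS_one (ω : Ω) : pS X 1 ω = X 0 ω := by
  show pS X 0 ω + X 0 ω = _; simp [pS]

/-- A crossing of level 2 at time `t ≥ 2` yields a visit at time `t - 1`. -/
lemma visit_of_crossAt {ω : Ω} (hg : Good X ω) {t : ℕ} (ht : 2 ≤ t)
    (hc : crossAt X 2 t ω) : visit X (t - 1) ω := by
  obtain ⟨-, htau, hlt, _⟩ := hc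
  have hlt' : ((t - 1 : ℕ) : ℕ∞) < tauRW X ω :=
    lt_of_lt_of_le (Nat.cast_lt.mpr (by omega)) htau
  refine ⟨by omega, ?_, hlt'⟩
  rcases lt_tau_iff.mp hlt' with h0 | ⟨hX0, h⟩
  · omega
  · have hpos : 0 < pS X (t - 1) ω := by
      rcases Nat.lt_or_ge (t - 1) 2 with h2 | h2
      · have : t - 1 = 1 := by omega
        rw [this, pS_one]; exact hX0
      · exact h (t - 1) (by omega) le_rfl
    exact eq_one_of_pos_lt_two hg hpos hlt

/-- If there is a visit at `n` and a later visit, then `X n ω = 2` (on good paths). -/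
lemma step_eq_two_of_visits {ω : Ω} (hg : Good X ω) {n u : ℕ}
    (hn : visit X n ω) (hu : visit X u ω) (hnu : n < u) : X n ω = 2 := by
  obtain ⟨hn1, hSn, _⟩ := hn
  obtain ⟨hu1, _, hutau⟩ := hu
  rcases hg n with h | h | h
  · exact h
  all_goals {
    exfalso
    have hS : pS X (n + 1) ω ≤ 0 := by
      show pS X n ω + X n ω ≤ 0
      rw [hSn, h]; norm_num
    rcases lt_tau_iff.mp hutau with h0 | ⟨_, hpos⟩
    · omega
    · exact absurd (hpos (n + 1) (by omega) (by omega)) (not_lt.mpr hS) }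

lemma nvb_succ_of_visit {X : ℕ → Ω → ℝ} {n : ℕ} {ω : Ω} (h : visit X n ω) :
    nvb X (n + 1) ω = nvb X n ω + 1 := by
  unfold nvb
  rw [Finset.range_add_one, Finset.filter_insert, if_pos h,
    Finset.card_insert_of_notMem (by simp)]

lemma nvb_succ_of_not_visit {X : ℕ → Ω → ℝ} {n : ℕ} {ω : Ω} (h : ¬ visit X n ω) :
    nvb X (n + 1) ω = nvb X n ω := by
  unfold nvb
  rw [Finset.range_add_one, Finset.filter_insert, if_neg h]

/-- If there are `k+1` visits then some visit has exactly `k` visits before it. -/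
lemma exists_exact_count {ω : Ω} {k : ℕ} (s : Finset ℕ)
    (hcard : k + 1 ≤ s.card) (hs : ∀ t ∈ s, visit X t ω) :
    ∃ n, visit X n ω ∧ nvb X n ω = k := by
  classical
  have hne : s.Nonempty := Finset.card_pos.mp (by omega)
  have hP : ∃ N, k + 1 ≤ nvb X N ω := by
    refine ⟨s.max' hne + 1, le_trans hcard (Finset.card_le_card ?_)⟩
    intro t ht
    simp only [Finset.mem_filter, Finset.mem_range]
    exact ⟨by have := Finset.le_max' s t ht; omega, hs t ht⟩
  have hspec : k + 1 ≤ nvb X (Nat.find hP) ω := Nat.find_spec hP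
  have hN0 : Nat.find hP ≠ 0 := by
    intro h0
    rw [h0] at hspec
    simp [nvb] at hspec
  obtain ⟨M, hM⟩ : ∃ M, Nat.find hP = M + 1 := ⟨Nat.find hP - 1, by omega⟩
  rw [hM] at hspec
  have hmin : ¬ (k + 1 ≤ nvb X M ω) := Nat.find_min hP (by omega)
  by_cases hv : visit X M ω
  · rw [nvb_succ_of_visit hv] at hspec
    exact ⟨M, hv, by omega⟩
  · rw [nvb_succ_of_not_visit hv] at hspec
    omega

/-- From a visit with exactly `k+1` visits before it, extract (on good paths) a visit `n`
with exactly `k` visits before it, such that `X n ω = 2`. -/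
lemma extract_step {ω : Ω} (hg : Good X ω) {k m : ℕ}
    (hm : visit X m ω) (hk : nvb X m ω = k + 1) :
    ∃ n, (visit X n ω ∧ nvb X n ω = k) ∧ X n ω = 2 := by
  classical
  set F := (Finset.range m).filter (fun t => visit X t ω) with hF
  have hFcard : F.card = k + 1 := hk
  have hFne : F.Nonempty := Finset.card_pos.mp (by omega)
  set n := F.max' hFne with hn
  have hnF : n ∈ F := F.max'_mem hFne
  have hnm : n < m := by
    have := (Finset.mem_filter.mp hnF).1
    simpa [Finset.mem_range] using this
  have hvn : visit X n ω := (Finset.mem_filter.mp hnF).2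
  have hcount : nvb X n ω = k := by
    have hEq : (Finset.range n).filter (fun t => visit X t ω) = F.erase n := by
      ext t
      simp only [Finset.mem_filter, Finset.mem_range, Finset.mem_erase, hF]
      constructor
      · rintro ⟨htn, hv⟩
        exact ⟨by omega, by omega, hv⟩
      · rintro ⟨htn, htm, hv⟩
        have := Finset.le_max' F t (Finset.mem_filter.mpr ⟨Finset.mem_range.mpr htm, hv⟩)
        exact ⟨by omega, hv⟩
    unfold nvb
    rw [hEq, Finset.card_erase_of_mem hnF, hFcard]
    omega
  exact ⟨n, ⟨hvn, hcount⟩, step_eq_two_of_visits hg hvn hm hnm⟩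


lemma crossSet_def (X : ℕ → Ω → ℝ) (α : ℝ) (ω : Ω) :
    {t : ℕ | 1 ≤ t ∧ (t : ℕ∞) ≤ tauRW X ω ∧ pS X (t - 1) ω < α ∧ α ≤ pS X t ω}
      = {t : ℕ | crossAt X α t ω} := rfl

/-- From at least `k+2` crossings, a visit with exactly `k` visits before it. -/
lemma exact_count_of_crossings {ω : Ω} (hg : Good X ω) {k : ℕ} (s : Finset ℕ)
    (hcard : k + 2 ≤ s.card) (hs : ∀ t ∈ s, crossAt X 2 t ω) :
    ∃ n, visit X n ω ∧ nvb X n ω = k := by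
  classical
  set s' := (s.erase 1).image (· - 1) with hs'
  refine exists_exact_count s' ?_ ?_
  · rw [hs', Finset.card_image_of_injOn]
    · have := Finset.pred_card_le_card_erase (s := s) (a := 1)
      omega
    · intro t ht u hu h
      simp only at h
      have h1t : 1 ≤ t := (hs t (Finset.mem_of_mem_erase ht)).1
      have h1u : 1 ≤ u := (hs u (Finset.mem_of_mem_erase hu)).1
      have : t ≠ 1 := (Finset.mem_erase.mp ht).1
      have : u ≠ 1 := (Finset.mem_erase.mp hu).1
      omega
  · intro t ht
    rw [hs'] at ht
    obtain ⟨u, hu, rfl⟩ := Finset.mem_image.mp ht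
    have hcu := hs u (Finset.mem_of_mem_erase hu)
    have h1u : 1 ≤ u := hcu.1
    have : u ≠ 1 := (Finset.mem_erase.mp hu).1
    exact visit_of_crossAt hg (by omega) hcu

/-- If no visit has exactly `k` visits before it, the crossing set is small. -/
lemma cross_finite_of_not_exact {ω : Ω} (hg : Good X ω) {k : ℕ}
    (h : ¬ ∃ n, visit X n ω ∧ nvb X n ω = k) :
    {t : ℕ | crossAt X 2 t ω}.Finite ∧ {t : ℕ | crossAt X 2 t ω}.ncard ≤ k + 1 := by
  classical
  have hb : ∀ s : Finset ℕ, (∀ t ∈ s, crossAt X 2 t ω) → s.card ≤ k + 1 := by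
    intro s hs
    by_contra hc
    push_neg at hc
    exact h (exact_count_of_crossings hg s (by omega) hs)
  have hfin : {t : ℕ | crossAt X 2 t ω}.Finite := by
    by_contra hinf
    obtain ⟨s, hsub, hcard⟩ := Set.Infinite.exists_subset_card_eq hinf (k + 2)
    have := hb s (fun t ht => hsub ht)
    omega
  refine ⟨hfin, ?_⟩
  have := hb hfin.toFinset (fun t ht => (Set.Finite.mem_toFinset hfin).mp ht)
  rwa [Set.ncard_eq_toFinset_card _ hfin]

section Meas

lemma measurable_pS' {m0 : MeasurableSpace Ω} {n : ℕ}
    (hX : ∀ i < n, Measurable[m0] (X i)) : ∀ t ≤ n, Measurable[m0] (pS X t) := by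
  intro t
  induction t with
  | zero => intro _; simpa [pS] using @measurable_const ℝ Ω _ m0 0
  | succ u ih =>
    intro hu
    have h1 : Measurable[m0] (pS X u) := ih (by omega)
    have h2 : Measurable[m0] (X u) := hX u (by omega)
    exact h1.add h2

lemma measurableSet_lt_tau {m0 : MeasurableSpace Ω} {n : ℕ}
    (hX : ∀ i < n, Measurable[m0] (X i)) {t : ℕ} (ht : t ≤ n) :
    MeasurableSet[m0] {ω | (t : ℕ∞) < tauRW X ω} := by
  rcases Nat.eq_zero_or_pos t with rfl | htpos
  · have : {ω : Ω | ((0 : ℕ) : ℕ∞) < tauRW X ω} = Set.univ :=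
      Set.eq_univ_of_forall fun ω => lt_tau_iff.mpr (Or.inl rfl)
    rw [this]; exact MeasurableSet.univ
  · have hn : 0 < n := by omega
    have hEq : {ω | (t : ℕ∞) < tauRW X ω}
        = {ω | 0 < X 0 ω} ∩ ⋂ s ∈ Finset.Icc 2 t, {ω | 0 < pS X s ω} := by
      ext ω
      simp only [Set.mem_setOf_eq, Set.mem_inter_iff, Set.mem_iInter, Finset.mem_Icc,
        lt_tau_iff]
      constructor
      · rintro (h0 | ⟨hx, h⟩)
        · omega
        · exact ⟨hx, fun s hs => h s (by omega) (by omega)⟩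
      · rintro ⟨hx, h⟩
        exact Or.inr ⟨hx, fun s h1 h2 => h s ⟨by omega, by omega⟩⟩
    rw [hEq]
    refine MeasurableSet.inter (measurableSet_lt (measurable_const) (hX 0 hn)) ?_
    refine MeasurableSet.biInter (Finset.Icc 2 t).countable_toSet fun s hs => ?_
    have hs2 : s ∈ Finset.Icc 2 t := hs
    rw [Finset.mem_Icc] at hs2
    have hsn : s ≤ n := le_trans hs2.2 ht
    exact measurableSet_lt measurable_const (measurable_pS' hX s hsn)

lemma measurableSet_le_tau {m0 : MeasurableSpace Ω} {n : ℕ}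
    (hX : ∀ i < n, Measurable[m0] (X i)) {t : ℕ} (ht : t ≤ n) :
    MeasurableSet[m0] {ω | (t : ℕ∞) ≤ tauRW X ω} := by
  rcases Nat.lt_or_ge t 1 with htpos | htpos
  · have : {ω : Ω | ((t : ℕ) : ℕ∞) ≤ tauRW X ω} = Set.univ := by
      ext ω; simp only [Set.mem_setOf_eq, Set.mem_univ, iff_true, le_tau_iff]
      exact Or.inl (by omega)
    rw [this]; exact MeasurableSet.univ
  · have hEq : {ω | (t : ℕ∞) ≤ tauRW X ω} = {ω | ((t - 1 : ℕ) : ℕ∞) < tauRW X ω} := by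
      ext ω
      simp only [Set.mem_setOf_eq, le_tau_iff, lt_tau_iff]
      constructor
      · rintro (h0 | ⟨hx, h⟩)
        · exact Or.inl (by omega)
        · exact Or.inr ⟨hx, fun s h1 h2 => h s h1 (by omega)⟩
      · rintro (h0 | ⟨hx, h⟩)
        · exact Or.inl (by omega)
        · exact Or.inr ⟨hx, fun s h1 h2 => h s h1 (by omega)⟩
    rw [hEq]
    exact measurableSet_lt_tau hX (by omega)

lemma measurableSet_visit {m0 : MeasurableSpace Ω} {n : ℕ}
    (hX : ∀ i < n, Measurable[m0] (X i)) {t : ℕ} (ht : t ≤ n) :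
    MeasurableSet[m0] {ω | visit X t ω} := by
  have hEq : {ω | visit X t ω}
      = ({ω | 1 ≤ t} ∩ {ω | pS X t ω = 1}) ∩ {ω | (t : ℕ∞) < tauRW X ω} := by
    ext ω; simp [visit, Set.mem_setOf_eq, and_assoc]
  rw [hEq]
  refine MeasurableSet.inter (MeasurableSet.inter ?_ ?_) (measurableSet_lt_tau hX ht)
  · by_cases h : 1 ≤ t
    · simp only [h, Set.setOf_true]; exact MeasurableSet.univ
    · simp only [h, Set.setOf_false]; exact MeasurableSet.empty
  · exact (measurable_pS' hX t ht) (measurableSet_singleton 1)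

lemma measurable_nvb {m0 : MeasurableSpace Ω} {n : ℕ}
    (hX : ∀ i < n, Measurable[m0] (X i)) :
    Measurable[m0] (fun ω => nvb X n ω) := by
  classical
  have hEq : (fun ω => nvb X n ω)
      = fun ω => ∑ t ∈ Finset.range n, if visit X t ω then 1 else 0 := by
    funext ω
    rw [nvb, Finset.card_filter]
  rw [hEq]
  refine Finset.measurable_sum _ fun t ht => Measurable.ite ?_ measurable_const
    measurable_const
  exact measurableSet_visit hX (le_of_lt (Finset.mem_range.mp ht))

lemma measurableSet_D {m0 : MeasurableSpace Ω} {n : ℕ}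
    (hX : ∀ i < n, Measurable[m0] (X i)) (k : ℕ) :
    MeasurableSet[m0] {ω | visit X n ω ∧ nvb X n ω = k} := by
  have : {ω | visit X n ω ∧ nvb X n ω = k}
      = {ω | visit X n ω} ∩ (fun ω => nvb X n ω) ⁻¹' {k} := rfl
  rw [this]
  exact (measurableSet_visit hX le_rfl).inter
    ((measurable_nvb hX) (measurableSet_singleton k))

lemma measurableSet_crossAt (hmeas : ∀ i, Measurable (X i)) (α : ℝ) (t : ℕ) :
    MeasurableSet {ω | crossAt X α t ω} := by
  have hX : ∀ i < t + 1, Measurable (X i) := fun i _ => hmeas i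
  have hEq : {ω | crossAt X α t ω}
      = (({ω | 1 ≤ t} ∩ {ω | (t : ℕ∞) ≤ tauRW X ω}) ∩ {ω | pS X (t - 1) ω < α})
        ∩ {ω | α ≤ pS X t ω} := by
    ext ω; simp [crossAt, Set.mem_setOf_eq, and_assoc]
  rw [hEq]
  refine MeasurableSet.inter (MeasurableSet.inter (MeasurableSet.inter ?_ ?_) ?_) ?_
  · by_cases h : 1 ≤ t
    · simp only [h, Set.setOf_true]; exact MeasurableSet.univ
    · simp only [h, Set.setOf_false]; exact MeasurableSet.empty
  · exact measurableSet_le_tau hX (by omega)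
  · exact measurableSet_lt (measurable_pS' hX (t - 1) (by omega)) measurable_const
  · exact measurableSet_le measurable_const (measurable_pS' hX t (by omega))

open scoped Classical in
lemma measurable_nCross (hmeas : ∀ i, Measurable (X i)) (α : ℝ) :
    Measurable (fun ω => nCross X α ω) := by
  classical
  have hcross : ∀ t, MeasurableSet {ω | crossAt X α t ω} := measurableSet_crossAt hmeas α
  have hkey : ∀ k : ℕ, MeasurableSet {ω | nCross X α ω = k + 1} := by
    intro k
    have hEq : {ω | nCross X α ω = k + 1}
        = ⋃ N : ℕ, ((⋂ t : ℕ, {ω | crossAt X α t ω → t < N})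
            ∩ {ω | ((Finset.range N).filter (fun t => crossAt X α t ω)).card = k + 1}) := by
      ext ω
      simp only [Set.mem_setOf_eq, Set.mem_iUnion, Set.mem_inter_iff, Set.mem_iInter]
      constructor
      · intro h
        have h0 : {t | crossAt X α t ω}.ncard = k + 1 := by
          rw [← h]; rfl
        have hfin : {t | crossAt X α t ω}.Finite := by
          by_contra hinf
          rw [Set.Infinite.ncard hinf] at h0
          omega
        obtain ⟨N, hN⟩ : ∃ N, ∀ t, crossAt X α t ω → t < N := by
          obtain ⟨N, hN⟩ := Set.Finite.bddAbove hfin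
          exact ⟨N + 1, fun t ht => by have := hN ht; omega⟩
        refine ⟨N, hN, ?_⟩
        have hset : {t | crossAt X α t ω}
            = ↑((Finset.range N).filter (fun t => crossAt X α t ω)) := by
          ext t
          simp only [Set.mem_setOf_eq, Finset.coe_filter, Finset.mem_range]
          exact ⟨fun h' => ⟨hN t h', h'⟩, fun h' => h'.2⟩
        rw [hset, Set.ncard_coe_finset] at h0
        exact h0
      · rintro ⟨N, hN, hcard⟩
        show {t | crossAt X α t ω}.ncard = k + 1
        have hset : {t | crossAt X α t ω}
            = ↑((Finset.range N).filter (fun t => crossAt X α t ω)) := by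
          ext t
          simp only [Set.mem_setOf_eq, Finset.coe_filter, Finset.mem_range]
          exact ⟨fun h' => ⟨hN t h', h'⟩, fun h' => h'.2⟩
        rw [hset, Set.ncard_coe_finset]
        exact hcard
    rw [hEq]
    refine MeasurableSet.iUnion fun N => MeasurableSet.inter ?_ ?_
    · refine MeasurableSet.iInter fun t => ?_
      by_cases htN : t < N
      · have : {ω : Ω | crossAt X α t ω → t < N} = Set.univ := by
          ext ω; simp [htN]
        rw [this]; exact MeasurableSet.univ
      · have : {ω : Ω | crossAt X α t ω → t < N} = {ω | crossAt X α t ω}ᶜ := by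
          ext ω; simp [htN]
        rw [this]; exact (hcross t).compl
    · have : Measurable (fun ω => ((Finset.range N).filter
          (fun t => crossAt X α t ω)).card) := by
        have hEq2 : (fun ω => ((Finset.range N).filter (fun t => crossAt X α t ω)).card)
            = fun ω => ∑ t ∈ Finset.range N, if crossAt X α t ω then 1 else 0 := by
          funext ω; rw [Finset.card_filter]
        rw [hEq2]
        exact Finset.measurable_sum _ fun t _ =>
          Measurable.ite (hcross t) measurable_const measurable_const
      exact this (measurableSet_singleton (k + 1))
  refine measurable_to_countable' fun k => ?_
  rcases Nat.eq_zero_or_pos k with rfl | hk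
  · have : (fun ω => nCross X α ω) ⁻¹' {0} = (⋃ j : ℕ, {ω | nCross X α ω = j + 1})ᶜ := by
      ext ω
      simp only [Set.mem_preimage, Set.mem_singleton_iff, Set.mem_compl_iff,
        Set.mem_iUnion, Set.mem_setOf_eq]
      constructor
      · intro h; push_neg; intro j; omega
      · intro h; push_neg at h
        by_contra h0
        exact h (nCross X α ω - 1) (by omega)
    rw [this]
    exact (MeasurableSet.iUnion fun j => hkey j).compl
  · have : (fun ω => nCross X α ω) ⁻¹' {k} = {ω | nCross X α ω = (k - 1) + 1} := by
      ext ω; simp only [Set.mem_preimage, Set.mem_singleton_iff, Set.mem_setOf_eq]; omega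
    rw [this]
    exact hkey (k - 1)

end Meas

end RWaux

/-- For the random walk whose step takes the value `2` with probability
`1/2`, the value `-1` with probability `1/4` and the value `-3` with probability `1/4`,
one has `E L_2 > 1/2`. -/
theorem stmt14 (μ : Measure Ω) [IsProbabilityMeasure μ]
    (X : ℕ → Ω → ℝ) (hmeas : ∀ i, Measurable (X i))
    (hindep : iIndepFun X μ)
    (hident : ∀ i, IdentDistrib (X i) (X 0) μ μ)
    (h1 : μ {ω | X 0 ω = 2} = 1 / 2) (h2 : μ {ω | X 0 ω = -1} = 1 / 4)
    (h3 : μ {ω | X 0 ω = -3} = 1 / 4) :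
    1 / 2 < EL μ X 2 := by
  classical
  -- notation
  set f : Ω → ℝ := fun ω => (nCross X 2 ω : ℝ) with hf
  -- the good set
  set G : Set Ω := {ω | RWaux.Good X ω} with hG
  have hstep : ∀ i, μ (X i ⁻¹' {2, -1, -3}) = 1 := by
    intro i
    have hident' : μ (X i ⁻¹' ({2, -1, -3} : Set ℝ)) = μ (X 0 ⁻¹' ({2, -1, -3} : Set ℝ)) :=
      (hident i).measure_mem_eq (by measurability)
    rw [hident']
    have hsplit : (X 0 ⁻¹' ({2, -1, -3} : Set ℝ))
        = {ω | X 0 ω = 2} ∪ ({ω | X 0 ω = -1} ∪ {ω | X 0 ω = -3}) := by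
      ext ω; simp [Set.mem_preimage, Set.mem_insert_iff]
    rw [hsplit]
    have hm1 : MeasurableSet {ω | X 0 ω = -1} := hmeas 0 (measurableSet_singleton (-1))
    have hm3 : MeasurableSet {ω | X 0 ω = -3} := hmeas 0 (measurableSet_singleton (-3))
    have hd23 : Disjoint {ω | X 0 ω = -1} {ω | X 0 ω = -3} := by
      rw [Set.disjoint_left]; intro ω hω1 hω3
      simp only [Set.mem_setOf_eq] at hω1 hω3; rw [hω1] at hω3; norm_num at hω3
    have hd123 : Disjoint {ω | X 0 ω = 2} ({ω | X 0 ω = -1} ∪ {ω | X 0 ω = -3}) := by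
      rw [Set.disjoint_left]; intro ω hω1 hω3
      simp only [Set.mem_setOf_eq, Set.mem_union] at hω1 hω3
      rcases hω3 with h | h <;> rw [hω1] at h <;> norm_num at h
    rw [measure_union hd123 (hm1.union hm3), measure_union hd23 hm3, h1, h2, h3]
    have h4 : (1:ℝ≥0∞)/4 + 1/4 = 1/2 := by
      rw [ENNReal.div_add_div_same, ENNReal.div_eq_div_iff] <;> norm_num
    rw [h4, ENNReal.div_add_div_same]
    norm_num
    rw [ENNReal.div_self] <;> norm_num
  have hGc : μ Gᶜ = 0 := by
    have hsub : Gᶜ ⊆ ⋃ i, (X i ⁻¹' ({2, -1, -3} : Set ℝ))ᶜ := by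
      intro ω hω
      simp only [hG, Set.mem_compl_iff, Set.mem_setOf_eq, RWaux.Good] at hω
      push_neg at hω
      obtain ⟨i, hi⟩ := hω
      refine Set.mem_iUnion.mpr ⟨i, ?_⟩
      simp only [Set.mem_compl_iff, Set.mem_preimage, Set.mem_insert_iff,
        Set.mem_singleton_iff]
      tauto
    refine measure_mono_null hsub (measure_iUnion_null fun i => ?_)
    have := hstep i
    have hmi : MeasurableSet (X i ⁻¹' ({2, -1, -3} : Set ℝ)) :=
      hmeas i (by measurability)
    rw [measure_compl hmi (measure_ne_top μ _), this, measure_univ]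
    simp
  -- the events D k n and E k
  set D : ℕ → ℕ → Set Ω := fun k n => {ω | RWaux.visit X n ω ∧ RWaux.nvb X n ω = k}
    with hD
  set E : ℕ → Set Ω := fun k => ⋃ n, D k n with hE
  have hDmeas : ∀ k n, MeasurableSet (D k n) := fun k n =>
    RWaux.measurableSet_D (fun i _ => hmeas i) k
  have hDdisj : ∀ k, Pairwise (Function.onFun Disjoint fun n => D k n) := by
    intro k n m hnm
    have key : ∀ n m : ℕ, n < m → Disjoint (D k n) (D k m) := by
      intro n m hlt
      rw [Set.disjoint_left]
      rintro ω ⟨hvn, hcn⟩ ⟨hvm, hcm⟩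
      have hsub : insert n ((Finset.range n).filter (fun t => RWaux.visit X t ω))
          ⊆ (Finset.range m).filter (fun t => RWaux.visit X t ω) := by
        intro t ht
        rcases Finset.mem_insert.mp ht with rfl | ht
        · exact Finset.mem_filter.mpr ⟨Finset.mem_range.mpr hlt, hvn⟩
        · obtain ⟨htn, htv⟩ := Finset.mem_filter.mp ht
          exact Finset.mem_filter.mpr
            ⟨Finset.mem_range.mpr (lt_trans (Finset.mem_range.mp htn) hlt), htv⟩
      have hcard := Finset.card_le_card hsub
      rw [Finset.card_insert_of_notMem (by simp)] at hcard
      have h1 : RWaux.nvb X n ω + 1 ≤ RWaux.nvb X m ω := hcard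
      omega
    rcases Nat.lt_or_ge n m with h | h
    · exact key n m h
    · exact (key m n (by omega)).symm
  have hEsum : ∀ k, μ (E k) = ∑' n, μ (D k n) := fun k =>
    measure_iUnion (hDdisj k) (hDmeas k)
  -- independence: μ (D k n ∩ {X n = 2}) = μ (D k n) * μ {X n = 2}
  have hindep' : ∀ k n, μ (D k n ∩ {ω | X n ω = 2}) = μ (D k n) * μ {ω | X n ω = 2} := by
    intro k n
    have hdisjST : Disjoint (Finset.range n) ({n} : Finset ℕ) :=
      Finset.disjoint_singleton_right.mpr (by simp)
    have hIF := hindep.indepFun_finset (Finset.range n) {n} hdisjST hmeas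
    set F : Ω → ((i : Finset.range n) → ℝ) := fun a i => X i a with hF
    set Gn : Ω → ((i : ({n} : Finset ℕ)) → ℝ) := fun a i => X i a with hGn
    have hmF : Measurable[MeasurableSpace.comap F MeasurableSpace.pi] F :=
      measurable_iff_comap_le.mpr le_rfl
    have hXi : ∀ i < n, Measurable[MeasurableSpace.comap F MeasurableSpace.pi] (X i) := by
      intro i hi
      have : X i = (fun v : (i : Finset.range n) → ℝ =>
          v ⟨i, Finset.mem_range.mpr hi⟩) ∘ F := rfl
      rw [this]
      exact (measurable_pi_apply _).comp hmF
    obtain ⟨s, hs, hsD⟩ := RWaux.measurableSet_D (X := X) hXi k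
    have htset : MeasurableSet ((fun v : (i : ({n} : Finset ℕ)) → ℝ =>
        v ⟨n, Finset.mem_singleton_self n⟩) ⁻¹' {2}) :=
      (measurable_pi_apply _) (measurableSet_singleton 2)
    have hGpre : Gn ⁻¹' ((fun v : (i : ({n} : Finset ℕ)) → ℝ =>
        v ⟨n, Finset.mem_singleton_self n⟩) ⁻¹' {2}) = {ω | X n ω = 2} := rfl
    have := hIF.measure_inter_preimage_eq_mul s
      ((fun v : (i : ({n} : Finset ℕ)) → ℝ => v ⟨n, Finset.mem_singleton_self n⟩) ⁻¹' {2})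
      hs htset
    rw [hsD, hGpre] at this
    exact this
  have hX2 : ∀ n, μ {ω | X n ω = 2} = 2⁻¹ := by
    intro n
    have : μ (X n ⁻¹' ({2} : Set ℝ)) = μ (X 0 ⁻¹' ({2} : Set ℝ)) :=
      (hident n).measure_mem_eq (measurableSet_singleton 2)
    have h2' : μ {ω | X n ω = 2} = μ {ω | X 0 ω = 2} := this
    rw [h2', h1]
    rw [one_div]
  -- geometric decay of E k
  have hEstep : ∀ k, μ (E (k + 1)) ≤ μ (E k) * 2⁻¹ := by
    intro k
    have hsub : E (k + 1) ∩ G ⊆ ⋃ n, (D k n ∩ {ω | X n ω = 2}) := by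
      rintro ω ⟨hEk, hGω⟩
      obtain ⟨m, hm⟩ := Set.mem_iUnion.mp hEk
      obtain ⟨n, hn, hXn⟩ := RWaux.extract_step hGω hm.1 hm.2
      exact Set.mem_iUnion.mpr ⟨n, hn, hXn⟩
    have h0 : μ (E (k + 1)) ≤ μ (E (k + 1) ∩ G) + μ (E (k + 1) \ G) :=
      measure_le_inter_add_diff μ _ _
    have h1' : μ (E (k + 1) \ G) = 0 :=
      measure_mono_null (Set.diff_subset_compl _ _) hGc
    have h2' : μ (E (k + 1) ∩ G) ≤ ∑' n, μ (D k n ∩ {ω | X n ω = 2}) :=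
      le_trans (measure_mono hsub) (measure_iUnion_le _)
    calc μ (E (k + 1)) ≤ μ (E (k + 1) ∩ G) + 0 := by rw [← h1']; exact h0
    _ = μ (E (k + 1) ∩ G) := by rw [add_zero]
    _ ≤ ∑' n, μ (D k n ∩ {ω | X n ω = 2}) := h2'
    _ = ∑' n, μ (D k n) * 2⁻¹ := by
        refine tsum_congr fun n => ?_
        rw [hindep' k n, hX2 n]
    _ = (∑' n, μ (D k n)) * 2⁻¹ := ENNReal.tsum_mul_right
    _ = μ (E k) * 2⁻¹ := by rw [hEsum k]
  have hEbound : ∀ k, μ (E k) ≤ 2⁻¹ ^ k := by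
    intro k
    induction k with
    | zero => simpa using prob_le_one
    | succ j ih =>
      calc μ (E (j + 1)) ≤ μ (E j) * 2⁻¹ := hEstep j
      _ ≤ 2⁻¹ ^ j * 2⁻¹ := mul_le_mul_left ih 2⁻¹
      _ = 2⁻¹ ^ (j + 1) := by rw [pow_succ]
  -- tail bound for nCross
  have hcrossEq : ∀ ω, {t : ℕ | 1 ≤ t ∧ (t : ℕ∞) ≤ tauRW X ω ∧ pS X (t - 1) ω < 2
      ∧ 2 ≤ pS X t ω} = {t : ℕ | RWaux.crossAt X 2 t ω} := fun ω => rfl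
  have htail : ∀ j : ℕ, {ω | j + 2 ≤ nCross X 2 ω} ∩ G ⊆ E j := by
    rintro j ω ⟨hj, hGω⟩
    simp only [Set.mem_setOf_eq] at hj
    have hj' : j + 2 ≤ ({t : ℕ | RWaux.crossAt X 2 t ω}).ncard := hj
    have hfin : ({t : ℕ | RWaux.crossAt X 2 t ω}).Finite := by
      by_contra hinf
      rw [Set.Infinite.ncard hinf] at hj'
      omega
    have hcard : j + 2 ≤ hfin.toFinset.card := by
      rwa [Set.ncard_eq_toFinset_card _ hfin] at hj'
    obtain ⟨n, hv, hc⟩ := RWaux.exact_count_of_crossings hGω hfin.toFinset hcard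
      (fun t ht => (Set.Finite.mem_toFinset hfin).mp ht)
    exact Set.mem_iUnion.mpr ⟨n, hv, hc⟩
  have hmeasN : Measurable (fun ω => nCross X 2 ω) := RWaux.measurable_nCross hmeas 2
  have htailmu : ∀ j : ℕ, μ {ω | j + 2 ≤ nCross X 2 ω} ≤ 2⁻¹ ^ j := by
    intro j
    have h0 : μ {ω | j + 2 ≤ nCross X 2 ω}
        ≤ μ ({ω | j + 2 ≤ nCross X 2 ω} ∩ G) + μ ({ω | j + 2 ≤ nCross X 2 ω} \ G) :=
      measure_le_inter_add_diff μ _ _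
    have h1' : μ ({ω | j + 2 ≤ nCross X 2 ω} \ G) = 0 :=
      measure_mono_null (Set.diff_subset_compl _ _) hGc
    calc μ {ω | j + 2 ≤ nCross X 2 ω}
        ≤ μ ({ω | j + 2 ≤ nCross X 2 ω} ∩ G) + 0 := by rw [← h1']; exact h0
    _ = μ ({ω | j + 2 ≤ nCross X 2 ω} ∩ G) := by rw [add_zero]
    _ ≤ μ (E j) := measure_mono (htail j)
    _ ≤ 2⁻¹ ^ j := hEbound j
  -- lintegral of nCross is finite
  have hsetmeas : ∀ k : ℕ, MeasurableSet {ω | k < nCross X 2 ω} := by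
    intro k
    have : {ω | k < nCross X 2 ω} = (fun ω => nCross X 2 ω) ⁻¹' {j | k < j} := rfl
    rw [this]
    exact hmeasN (MeasurableSpace.measurableSet_top)
  have hlint : ∫⁻ ω, (nCross X 2 ω : ℝ≥0∞) ∂μ < ⊤ := by
    have hpt : ∀ ω, (nCross X 2 ω : ℝ≥0∞)
        = ∑' k : ℕ, ({ω' | k < nCross X 2 ω'}).indicator (fun _ => 1) ω := by
      intro ω
      have : ∀ k : ℕ, ({ω' | k < nCross X 2 ω'}).indicator
          (fun _ => (1 : ℝ≥0∞)) ω = if k < nCross X 2 ω then 1 else 0 := by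
        intro k; rw [Set.indicator_apply]; rfl
      simp_rw [this]
      rw [tsum_eq_sum (s := Finset.range (nCross X 2 ω))
        (fun b hb => by rw [if_neg]; simpa using hb)]
      rw [Finset.sum_congr rfl (fun x hx => if_pos (Finset.mem_range.mp hx)),
        Finset.sum_const, Finset.card_range, nsmul_eq_mul, mul_one]
    calc ∫⁻ ω, (nCross X 2 ω : ℝ≥0∞) ∂μ
        = ∑' k : ℕ, μ {ω | k < nCross X 2 ω} := by
          rw [lintegral_congr hpt, lintegral_tsum
            (fun k => ((measurable_const.indicator (hsetmeas k)).aemeasurable))]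
          exact tsum_congr fun k => lintegral_indicator_one (hsetmeas k)
    _ ≤ ∑' k : ℕ, 2 * 2⁻¹ ^ k := by
          refine ENNReal.tsum_le_tsum fun k => ?_
          rcases Nat.eq_zero_or_pos k with rfl | hk
          · calc μ {ω | 0 < nCross X 2 ω} ≤ 1 := prob_le_one
            _ ≤ 2 * 2⁻¹ ^ 0 := by norm_num
          · obtain ⟨j, rfl⟩ : ∃ j, k = j + 1 := ⟨k - 1, by omega⟩
            have hSeq : {ω | j + 1 < nCross X 2 ω} = {ω | j + 2 ≤ nCross X 2 ω} := by
              ext ω; simp only [Set.mem_setOf_eq]; omega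
            calc μ {ω | j + 1 < nCross X 2 ω} ≤ 2⁻¹ ^ j := by
                  rw [hSeq]; exact htailmu j
            _ = 2 * 2⁻¹ ^ (j + 1) := by
                  rw [pow_succ, ← mul_assoc]
                  rw [show ((2 : ℝ≥0∞) * 2⁻¹ ^ j * 2⁻¹) = (2 * 2⁻¹) * 2⁻¹ ^ j by ring,
                    ENNReal.mul_inv_cancel (by norm_num) (by norm_num), one_mul]
    _ = 2 * (1 - 2⁻¹)⁻¹ := by rw [ENNReal.tsum_mul_left, ENNReal.tsum_geometric]
    _ < ⊤ := by
          rw [ENNReal.one_sub_inv_two, inv_inv]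
          norm_num
  -- integrability of nCross
  have hfmeas : Measurable f := measurable_from_top.comp hmeasN
  have hnn : ∀ ω, (‖f ω‖₊ : ℝ≥0∞) = (nCross X 2 ω : ℝ≥0∞) := by
    intro ω
    simp [hf, Real.nnnorm_natCast]
  have hfint : Integrable f μ := by
    refine ⟨hfmeas.aestronglyMeasurable, ?_⟩
    show ∫⁻ a, (‖f a‖₊ : ℝ≥0∞) ∂μ < ⊤
    rw [lintegral_congr hnn]
    exact hlint
  -- the null set outside which the pointwise lower bound holds
  set Nbad : Set Ω := Gᶜ ∪ ⋂ k, E k with hNbad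
  have hNnull : μ Nbad = 0 := by
    have hInull : μ (⋂ k, E k) = 0 := by
      have hle : ∀ k, μ (⋂ k, E k) ≤ 2⁻¹ ^ k := fun k =>
        le_trans (measure_mono (Set.iInter_subset _ k)) (hEbound k)
      have htend : Filter.Tendsto (fun k : ℕ => (2⁻¹ : ℝ≥0∞) ^ k) Filter.atTop (nhds 0) :=
        ENNReal.tendsto_pow_atTop_nhds_zero_of_lt_one
          (by rw [ENNReal.inv_lt_one]; norm_num)
      have := ge_of_tendsto' htend hle
      exact le_antisymm this zero_le
    rw [hNbad]
    exact measure_union_null hGc hInull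
  -- events A and B
  set A : Set Ω := {ω | X 0 ω = 2} with hA
  set B : Set Ω := {ω | X 0 ω = 2} ∩ ({ω | X 1 ω = -1} ∩ {ω | X 2 ω = 2}) with hB
  set g : Ω → ℝ := fun ω => A.indicator (fun _ => 1) ω + B.indicator (fun _ => 1) ω
    with hg
  have hAmeas : MeasurableSet A := hmeas 0 (measurableSet_singleton 2)
  have hBmeas : MeasurableSet B :=
    (hmeas 0 (measurableSet_singleton 2)).inter
      ((hmeas 1 (measurableSet_singleton (-1))).inter (hmeas 2 (measurableSet_singleton 2)))
  -- pointwise lower bound outside Nbad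
  have hlow : ∀ ω, ω ∉ Nbad → g ω ≤ f ω := by
    intro ω hω
    rw [hNbad] at hω
    simp only [Set.mem_union, Set.mem_compl_iff, Set.mem_iInter, not_or, not_forall] at hω
    obtain ⟨hGω', ⟨k, hEk⟩⟩ := hω
    have hGω : RWaux.Good X ω := not_not.mp hGω'
    have hnex : ¬ ∃ n, RWaux.visit X n ω ∧ RWaux.nvb X n ω = k := by
      intro ⟨n, hn⟩
      exact hEk (Set.mem_iUnion.mpr ⟨n, hn⟩)
    obtain ⟨hfin, -⟩ := RWaux.cross_finite_of_not_exact hGω hnex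
    by_cases hAω : ω ∈ A
    · have hXω0 : X 0 ω = 2 := hAω
      have hcross1 : RWaux.crossAt X 2 1 ω := by
        refine ⟨le_rfl, RWaux.le_tau_iff.mpr (Or.inl le_rfl), ?_, ?_⟩
        · show pS X 0 ω < 2; show (0:ℝ) < 2; norm_num
        · show (2:ℝ) ≤ pS X 1 ω; rw [RWaux.pS_one, hXω0]
      by_cases hBω : ω ∈ B
      · have hX1ω : X 1 ω = -1 := hBω.2.1
        have hX2ω : X 2 ω = 2 := hBω.2.2
        have hpS2 : pS X 2 ω = 1 := by
          show pS X 1 ω + X 1 ω = 1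
          rw [RWaux.pS_one, hXω0, hX1ω]; norm_num
        have hpS3 : pS X 3 ω = 3 := by
          show pS X 2 ω + X 2 ω = 3
          rw [hpS2, hX2ω]; norm_num
        have hcross3 : RWaux.crossAt X 2 3 ω := by
          refine ⟨by omega, ?_, ?_, ?_⟩
          · refine RWaux.le_tau_iff.mpr (Or.inr ⟨by rw [hXω0]; norm_num, ?_⟩)
            intro s hs1 hs3
            have : s = 2 := by omega
            rw [this, hpS2]; norm_num
          · show pS X 2 ω < 2; rw [hpS2]; norm_num
          · show (2:ℝ) ≤ pS X 3 ω; rw [hpS3]; norm_num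
        have hsub : ({1, 3} : Set ℕ) ⊆ {t : ℕ | RWaux.crossAt X 2 t ω} := by
          intro t ht
          rcases ht with rfl | ht
          · exact hcross1
          · rw [Set.mem_singleton_iff] at ht; rw [ht]; exact hcross3
        have h2card : 2 ≤ nCross X 2 ω := by
          have := Set.ncard_le_ncard hsub hfin
          rwa [Set.ncard_pair (by norm_num : (1:ℕ) ≠ 3)] at this
        rw [hg]
        simp only [Set.indicator_of_mem hAω, Set.indicator_of_mem hBω]
        rw [hf]
        have : (2 : ℝ) ≤ (nCross X 2 ω : ℝ) := by exact_mod_cast h2card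
        linarith
      · have h1card : 1 ≤ nCross X 2 ω := by
          have hne : ({t : ℕ | RWaux.crossAt X 2 t ω}).Nonempty := ⟨1, hcross1⟩
          exact (Set.ncard_pos hfin).mpr hne
        rw [hg]
        simp only [Set.indicator_of_mem hAω, Set.indicator_of_notMem hBω]
        rw [hf]
        have : (1 : ℝ) ≤ (nCross X 2 ω : ℝ) := by exact_mod_cast h1card
        linarith
    · have hBω : ω ∉ B := fun h => hAω h.1
      rw [hg]
      simp only [Set.indicator_of_notMem hAω, Set.indicator_of_notMem hBω]
      rw [hf]
      have h0 : (0:ℝ) ≤ (nCross X 2 ω : ℝ) := Nat.cast_nonneg _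
      linarith
  have hae : g ≤ᵐ[μ] f := by
    have hsubN : {ω | ¬ (g ω ≤ f ω)} ⊆ Nbad := by
      intro ω hω
      by_contra hN
      exact hω (hlow ω hN)
    rw [Filter.EventuallyLE, ae_iff]
    exact measure_mono_null hsubN hNnull
  -- compute μ B
  have hmuB : μ B = 1 / 16 := by
    set v : ℕ → ℝ := fun i => if i = 1 then -1 else 2 with hv
    have hBeq : B = ⋂ i ∈ ({0, 1, 2} : Finset ℕ), X i ⁻¹' {v i} := by
      rw [hB]
      ext ω
      simp only [Set.mem_inter_iff, Set.mem_setOf_eq, Set.mem_iInter, Finset.mem_insert,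
        Finset.mem_singleton, Set.mem_preimage, Set.mem_singleton_iff]
      constructor
      · rintro ⟨h0, h1', h2'⟩ i hi
        rcases hi with rfl | rfl | rfl
        · simpa [hv] using h0
        · simpa [hv] using h1'
        · simpa [hv] using h2'
      · intro h
        refine ⟨?_, ?_, ?_⟩
        · simpa [hv] using h 0 (by norm_num)
        · simpa [hv] using h 1 (by norm_num)
        · simpa [hv] using h 2 (by norm_num)
    have hprod := hindep.meas_biInter (S := ({0, 1, 2} : Finset ℕ))
      (s := fun i => X i ⁻¹' {v i})
      (fun i _ => ⟨{v i}, measurableSet_singleton (v i), rfl⟩)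
    rw [hBeq, hprod]
    have e0 : μ (X 0 ⁻¹' {v 0}) = 1 / 2 := by
      have : v 0 = 2 := by simp [hv]
      rw [this]; exact h1
    have e1 : μ (X 1 ⁻¹' {v 1}) = 1 / 4 := by
      have hv1 : v 1 = -1 := by simp [hv]
      rw [hv1, (hident 1).measure_mem_eq (measurableSet_singleton (-1))]
      exact h2
    have e2 : μ (X 2 ⁻¹' {v 2}) = 1 / 2 := by
      have hv2 : v 2 = 2 := by simp [hv]
      rw [hv2, (hident 2).measure_mem_eq (measurableSet_singleton 2)]
      exact h1
    rw [show ({0, 1, 2} : Finset ℕ) = insert 0 (insert 1 ({2} : Finset ℕ)) from rfl]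
    rw [Finset.prod_insert (by norm_num), Finset.prod_insert (by norm_num),
      Finset.prod_singleton, e0, e1, e2]
    rw [show (1:ℝ≥0∞)/2 * (1/4 * (1/2)) = 1/16 by
      simp only [one_div]
      rw [← ENNReal.mul_inv (by norm_num) (by norm_num),
        ← ENNReal.mul_inv (by norm_num) (by norm_num)]
      norm_num]
  -- integrable g and its integral
  have hgint1 : Integrable (A.indicator (fun _ => (1:ℝ))) μ :=
    (integrable_const 1).indicator hAmeas
  have hgint2 : Integrable (B.indicator (fun _ => (1:ℝ))) μ :=
    (integrable_const 1).indicator hBmeas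
  have hgint : Integrable g μ := hgint1.add hgint2
  have hintg : ∫ ω, g ω ∂μ = (μ A).toReal + (μ B).toReal := by
    rw [hg]
    rw [integral_add hgint1 hgint2]
    congr 1
    · exact integral_indicator_one hAmeas
    · exact integral_indicator_one hBmeas
  have hEL : ∫ ω, g ω ∂μ ≤ EL μ X 2 := integral_mono_ae hgint hfint hae
  have hvals : (μ A).toReal = 1 / 2 ∧ (μ B).toReal = 1 / 16 := by
    constructor
    · rw [hA, h1]; simp [ENNReal.toReal_div]
    · rw [hmuB]; simp [ENNReal.toReal_div]
  rw [hintg, hvals.1, hvals.2] at hEL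
  linarith

end
end
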